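/- Let α ∈ (0,1) and c, c' > 0. Suppose every subgraph of G on k vertices (for every k ≥ 1) has a balanced separator of cardinality at most c·k^α, every balanced separator of G itself has cardinality at least c'·n^α, and c'·n^α ≥ 2. Let π_nd be a nested dissection order of G in which the separator chosen at every recursion step on a k-vertex subgraph has cardinality at most c·k^α. Then there exists a constant K depending only on α, c and c' (not on G or n) such that for every contraction order π: the maximum over vertices v of the number of vertices in SS(v) under π_nd is at most K times the corresponding maximum under π; the same holds for the average number of vertices of SS(v), the maximum number of arcs of SS(v), and the average number of arcs of SS(v). In other words, a nested dissection order gives a constant-factor approximation of the optimal maximum and average search space sizes, in vertices and in arcs. -/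

import Mathlib

open SimpleGraph
open scoped ENNReal

variable {V : Type*}

/-- One step of vertex contraction: remove `v` from the current graph and add an edge
between every pair of its current neighbors. -/
def chStep (H : SimpleGraph V) (v : V) : SimpleGraph V where
  Adj a b := a ≠ b ∧ a ≠ v ∧ b ≠ v ∧ (H.Adj a b ∨ (H.Adj v a ∧ H.Adj v b))
  symm := by
    constructor
    rintro a b ⟨h1, h2, h3, h4⟩
    refine ⟨h1.symm, h3, h2, ?_⟩
    rcases h4 with h | ⟨ha, hb⟩
    · exact Or.inl h.symm
    · exact Or.inr ⟨hb, ha⟩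
  loopless := ⟨fun a h => h.1 rfl⟩

/-- All edges ever present while contracting the vertices of the list in order:
the edges of the initial graph together with all added shortcuts. -/
def chList : SimpleGraph V → List V → SimpleGraph V
  | H, [] => H
  | H, v :: l => H ⊔ chList (chStep H v) l

/-- The rank of a vertex with respect to the contraction order `π`. -/
def rk {n : ℕ} (π : Fin n ≃ V) (v : V) : ℕ := (π.symm v : ℕ)

/-- The contraction hierarchy `G*π`: contract `π 0, π 1, …` in this order and collect
all original edges and all added shortcuts. -/
def chGraph {n : ℕ} (G : SimpleGraph V) (π : Fin n ≃ V) : SimpleGraph V :=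
  chList G ((List.finRange n).map ⇑π)

/-- A list of vertices is up-down w.r.t. a rank function: ranks strictly increase
along a prefix and strictly decrease along the remaining suffix, the two parts
meeting at the maximum-rank vertex. -/
def IsUpDown (r : V → ℕ) (l : List V) : Prop :=
  ∃ l₁ x l₂, l = l₁ ++ x :: l₂ ∧
    List.Chain' (fun a b => r a < r b) (l₁ ++ [x]) ∧
    List.Chain' (fun a b => r b < r a) (x :: l₂)

/-- Reachability in the upward directed graph `G^∧π` (edges of `G*π` directed from
lower to higher rank): the vertex set of the search space `SS v`. -/
def UpReach {n : ℕ} (G : SimpleGraph V) (π : Fin n ≃ V) (v u : V) : Prop :=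
  Relation.ReflTransGen (fun a b => (chGraph G π).Adj a b ∧ rk π a < rk π b) v u

/-- Length of a walk: the sum of the weights of its edges. -/
noncomputable def wlen {H : SimpleGraph V} (m : V → V → ℝ≥0∞) {s t : V}
    (p : H.Walk s t) : ℝ≥0∞ :=
  (p.darts.map (fun d => m d.toProd.1 d.toProd.2)).sum

/-- Shortest path distance in a graph `H` under edge weights `m`. -/
noncomputable def gdist (H : SimpleGraph V) (m : V → V → ℝ≥0∞) (s t : V) : ℝ≥0∞ :=
  ⨅ (p : H.Walk s t), wlen m p

/-- Minimum length of an up-down `s`-`t` path in `G*π`. -/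
noncomputable def updist {n : ℕ} (G : SimpleGraph V) (π : Fin n ≃ V)
    (m : V → V → ℝ≥0∞) (s t : V) : ℝ≥0∞ :=
  ⨅ (p : (chGraph G π).Walk s t) (_ : IsUpDown (rk π) p.support), wlen m p

/-- Minimum length of a strictly rank-increasing `u`-`v` path in `G*π`. -/
noncomputable def upOnlyDist {n : ℕ} (G : SimpleGraph V) (π : Fin n ≃ V)
    (m : V → V → ℝ≥0∞) (u v : V) : ℝ≥0∞ :=
  ⨅ (p : (chGraph G π).Walk u v)
    (_ : List.Chain' (fun a b => rk π a < rk π b) p.support), wlen m p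

/-- `S` is a balanced separator of the subgraph of `G` induced by `U`. -/
def IsBalancedSepOn [DecidableEq V] (G : SimpleGraph V) (U S : Finset V) : Prop :=
  S ⊆ U ∧ ∃ A B : Finset V, A ⊆ U ∧ B ⊆ U ∧
    Disjoint A B ∧ Disjoint A S ∧ Disjoint B S ∧ A ∪ B ∪ S = U ∧
    (∀ a ∈ A, ∀ b ∈ B, ¬ G.Adj a b) ∧
    3 * A.card ≤ 2 * U.card ∧ 3 * B.card ≤ 2 * U.card

/-- Nested dissection orders (as lists, earliest contracted first, separator last)
of induced subgraphs of `G`, in which the separator chosen at every recursion step on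
a `k`-vertex subgraph is balanced and has cardinality at most `c * k ^ α`. -/
inductive IsNDOrder [DecidableEq V] (G : SimpleGraph V) (c α : ℝ) : Finset V → List V → Prop
  | empty : IsNDOrder G c α ∅ []
  | step {U S A B : Finset V} {lA lB lS : List V} :
      Disjoint A B → Disjoint A S → Disjoint B S → A ∪ B ∪ S = U →
      (∀ a ∈ A, ∀ b ∈ B, ¬ G.Adj a b) →
      3 * A.card ≤ 2 * U.card → 3 * B.card ≤ 2 * U.card →
      ((S.card : ℝ) ≤ c * (U.card : ℝ) ^ α) →
      lS.Nodup → lS.toFinset = S →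
      IsNDOrder G c α A lA → IsNDOrder G c α B lB →
      IsNDOrder G c α U (lA ++ lB ++ lS)

/-- Number of vertices of the search space `SS v` in `G^∧π`. -/
noncomputable def nVertsSS {n : ℕ} (G : SimpleGraph V) (π : Fin n ≃ V) (v : V) : ℕ :=
  {u | UpReach G π v u}.ncard

/-- Number of arcs of the search space `SS v` in `G^∧π`: arcs of `G^∧π` with both
endpoints reachable from `v`. -/
noncomputable def nArcsSS {n : ℕ} (G : SimpleGraph V) (π : Fin n ≃ V) (v : V) : ℕ :=
  {q : V × V | (chGraph G π).Adj q.1 q.2 ∧ rk π q.1 < rk π q.2 ∧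
    UpReach G π v q.1 ∧ UpReach G π v q.2}.ncard

/-- The rank sequence of a walk: for each edge, the minimum of the ranks of its
endpoints, sorted in decreasing order. -/
def rankSeq {H : SimpleGraph V} (r : V → ℕ) {s t : V} (p : H.Walk s t) : List ℕ :=
  (p.darts.map (fun d => min (r d.toProd.1) (r d.toProd.2))).insertionSort (· ≥ ·)

/-- Directed length of a walk in `G*π` under a pair of directed metrics `(mu, md)`:
each edge traversed from lower rank to higher rank costs its upward weight,
each edge traversed from higher rank to lower rank costs its downward weight. -/
noncomputable def dlen {H : SimpleGraph V} (r : V → ℕ) (mu md : V → V → ℝ≥0∞)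
    {s t : V} (p : H.Walk s t) : ℝ≥0∞ :=
  (p.darts.map (fun d =>
    if r d.toProd.1 < r d.toProd.2 then mu d.toProd.1 d.toProd.2
    else md d.toProd.2 d.toProd.1)).sum

/-- Length of a directed walk `s :: l` under arc weights `wD`. -/
noncomputable def dWalkLen (wD : V → V → ℝ≥0∞) : V → List V → ℝ≥0∞
  | _, [] => 0
  | s, x :: l => wD s x + dWalkLen wD x l

/-- Shortest directed path distance in the directed graph `D` under arc weights `wD`. -/
noncomputable def ddist (D : V → V → Prop) (wD : V → V → ℝ≥0∞) (s t : V) : ℝ≥0∞ :=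
  ⨅ (l : List V) (_ : List.Chain D s l ∧ l.getLastD s = t), dWalkLen wD s l

lemma chain_cons' {R : V → V → Prop} {a b : V} {l : List V} :
    List.Chain R a (b :: l) ↔ R a b ∧ List.Chain R b l := List.isChain_cons_cons

@[simp] lemma chain_nil' {R : V → V → Prop} {a : V} : List.Chain R a [] :=
  List.IsChain.singleton a

section S1

variable {H : SimpleGraph V}

lemma chStep_adj {v a b : V} :
    (chStep H v).Adj a b ↔ a ≠ b ∧ a ≠ v ∧ b ≠ v ∧ (H.Adj a b ∨ (H.Adj v a ∧ H.Adj v b)) :=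
  Iff.rfl

lemma le_chList : ∀ (l : List V) (H : SimpleGraph V), H ≤ chList H l
  | [], H => le_refl _
  | v :: l, H => by
      show H ≤ H ⊔ _
      exact le_sup_left

/-- isolated vertex -/
def Isol (H : SimpleGraph V) (x : V) : Prop := ∀ w, ¬ H.Adj x w

lemma isol_chStep {x : V} (h : Isol H x) (v : V) : Isol (chStep H v) x := by
  intro w hw
  rcases hw with ⟨_, _, _, h4 | ⟨h5, h6⟩⟩
  · exact h w h4
  · exact h v h5.symm

lemma isol_chStep_self (v : V) : Isol (chStep H v) v := by
  intro w hw
  exact hw.2.1 rfl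

lemma isol_foldl {x : V} : ∀ (l : List V) (H : SimpleGraph V), Isol H x →
    Isol (List.foldl chStep H l) x
  | [], H, h => h
  | v :: l, H, h => isol_foldl l (chStep H v) (isol_chStep h v)

lemma isol_chList {x : V} : ∀ (l : List V) (H : SimpleGraph V), Isol H x →
    Isol (chList H l) x
  | [], H, h => h
  | v :: l, H, h => by
      intro w hw
      rcases hw with hw | hw
      · exact h w hw
      · exact isol_chList l (chStep H v) (isol_chStep h v) w hw

lemma isol_foldl_of_mem {x : V} : ∀ (l : List V) (H : SimpleGraph V), x ∈ l →
    Isol (List.foldl chStep H l) x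
  | v :: l, H, hx => by
      show Isol (List.foldl chStep (chStep H v) l) x
      rcases List.mem_cons.1 hx with rfl | hx
      · exact isol_foldl l _ (isol_chStep_self x)
      · exact isol_foldl_of_mem l (chStep H v) hx

/-- an edge of `chList H l` is present in the graph after processing some prefix -/
lemma chList_adj_exists_prefix {a b : V} : ∀ (l : List V) (H : SimpleGraph V),
    (chList H l).Adj a b → ∃ k ≤ l.length, (List.foldl chStep H (l.take k)).Adj a b
  | [], H, h => ⟨0, le_refl _, h⟩
  | v :: l, H, h => by
      rcases h with h | h
      · exact ⟨0, Nat.zero_le _, h⟩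
      · obtain ⟨k, hk, hadj⟩ := chList_adj_exists_prefix l (chStep H v) h
        exact ⟨k + 1, by simpa using Nat.succ_le_succ hk, hadj⟩

/-- persistence: edges survive contraction of other vertices -/
lemma adj_foldl_of_adj {a b : V} : ∀ (l : List V) (H : SimpleGraph V),
    H.Adj a b → a ∉ l → b ∉ l → (List.foldl chStep H l).Adj a b
  | [], H, h, _, _ => h
  | v :: l, H, h, ha, hb => by
      refine adj_foldl_of_adj l (chStep H v) ?_ (fun hc => ha (List.mem_cons_of_mem _ hc))
        (fun hc => hb (List.mem_cons_of_mem _ hc))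
      exact ⟨h.ne, fun hc => ha (hc ▸ List.mem_cons_self),
        fun hc => hb (hc ▸ List.mem_cons_self), Or.inl h⟩

/-- the graph after processing a prefix is below the full contraction hierarchy -/
lemma foldl_le_chList_append {a b : V} : ∀ (l₁ : List V) (H : SimpleGraph V) (l₂ : List V),
    (List.foldl chStep H l₁).Adj a b → (chList H (l₁ ++ l₂)).Adj a b
  | [], H, l₂, h => le_chList l₂ H h
  | v :: l₁, H, l₂, h => by
      right
      exact foldl_le_chList_append l₁ (chStep H v) l₂ h

lemma foldl_take_succ {l : List V} {k : ℕ} (hk : k < l.length) (H : SimpleGraph V) :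
    List.foldl chStep H (l.take (k + 1)) = chStep (List.foldl chStep H (l.take k)) (l.get ⟨k, hk⟩) := by
  rw [List.take_succ, List.foldl_append]
  simp [List.getElem?_eq_getElem hk]

end S1

section S2

variable [DecidableEq V] {H : SimpleGraph V}

/-- chain surgery: lift a chain in `chStep H v` to a chain in `H`, possibly detouring
through `v`. -/
lemma chain_lift {v : V} : ∀ (l : List V) (a b : V),
    List.Chain (chStep H v).Adj a (l ++ [b]) →
    ∃ zs : List V, List.Chain H.Adj a (zs ++ [b]) ∧ ∀ z ∈ zs, z ∈ l ∨ z = v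
  | [], a, b, h => by
      simp only [List.nil_append, chain_cons'] at h
      obtain ⟨⟨hne, hav, hbv, hor⟩, -⟩ := h
      rcases hor with h | ⟨h1, h2⟩
      · exact ⟨[], by simp [chain_cons', h], by simp⟩
      · exact ⟨[v], by simp [chain_cons', h1.symm, h2], by simp⟩
  | x :: l, a, b, h => by
      rw [List.cons_append, chain_cons'] at h
      obtain ⟨⟨hne, hav, hxv, hor⟩, hrest⟩ := h
      obtain ⟨zs, hzs, hmem⟩ := chain_lift l x b hrest
      rcases hor with h | ⟨h1, h2⟩
      · refine ⟨x :: zs, ?_, ?_⟩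
        · rw [List.cons_append, chain_cons']; exact ⟨h, hzs⟩
        · intro z hz
          rcases List.mem_cons.1 hz with rfl | hz
          · exact Or.inl (List.mem_cons_self)
          · rcases hmem z hz with h' | h'
            · exact Or.inl (List.mem_cons_of_mem _ h')
            · exact Or.inr h'
      · refine ⟨v :: x :: zs, ?_, ?_⟩
        · rw [List.cons_append, chain_cons', List.cons_append, chain_cons']
          exact ⟨h1.symm, h2, hzs⟩
        · intro z hz
          rcases List.mem_cons.1 hz with rfl | hz
          · exact Or.inr rfl
          · rcases List.mem_cons.1 hz with rfl | hz
            · exact Or.inl (List.mem_cons_self)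
            · rcases hmem z hz with h' | h'
              · exact Or.inl (List.mem_cons_of_mem _ h')
              · exact Or.inr h'

/-- Fill lemma: an edge of `chList H l` comes from an `H`-walk whose inner vertices
are contracted before both endpoints. -/
lemma chList_adj_fill {a b : V} : ∀ (l : List V) (H : SimpleGraph V),
    (chList H l).Adj a b →
    ∃ zs : List V, List.Chain H.Adj a (zs ++ [b]) ∧
      ∀ z ∈ zs, z ∈ l ∧ l.idxOf z < l.idxOf a ∧ l.idxOf z < l.idxOf b
  | l, H, h => by
    induction l generalizing H with
    | nil => exact ⟨[], by simp [chain_cons', show H.Adj a b from h], by simp⟩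
    | cons v t ih =>
      rcases h with h | h
      · exact ⟨[], by simp [chain_cons', show H.Adj a b from h], by simp⟩
      · -- a ≠ v and b ≠ v because v is isolated in chStep H v
        have hav : a ≠ v := by
          rintro rfl
          exact isol_chList t (chStep H a) (isol_chStep_self a) b h
        have hbv : b ≠ v := by
          rintro rfl
          exact isol_chList t (chStep H b) (isol_chStep_self b) a ((chList (chStep H b) t).adj_symm h)
        obtain ⟨zs, hch, hcond⟩ := ih (chStep H v) h
        obtain ⟨zs', hch', hmem'⟩ := chain_lift zs a b hch
        refine ⟨zs', hch', ?_⟩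
        intro z hz
        have hidxa : (v :: t).idxOf a = t.idxOf a + 1 := by
          simp [List.idxOf_cons, cond_eq_if, beq_iff_eq, Ne.symm hav]
        have hidxb : (v :: t).idxOf b = t.idxOf b + 1 := by
          simp [List.idxOf_cons, cond_eq_if, beq_iff_eq, Ne.symm hbv]
        have hidxv : (v :: t).idxOf v = 0 := List.idxOf_cons_self
        rcases hmem' z hz with hz' | rfl
        · obtain ⟨hzt, hza, hzb⟩ := hcond z hz'
          rcases eq_or_ne z v with rfl | hzv
          · exact ⟨List.mem_cons_self, by omega, by omega⟩
          · have : (v :: t).idxOf z = t.idxOf z + 1 := by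
              simp [List.idxOf_cons, cond_eq_if, beq_iff_eq, Ne.symm hzv]
            exact ⟨List.mem_cons_of_mem _ hzt, by omega, by omega⟩
        · exact ⟨List.mem_cons_self, by omega, by omega⟩

end S2

section S3

variable [DecidableEq V] {n : ℕ}

/-- the contraction order as a list -/
def Lnd (π : Fin n ≃ V) : List V := (List.finRange n).map ⇑π

lemma Lnd_length (π : Fin n ≃ V) : (Lnd π).length = n := by simp [Lnd]

lemma Lnd_nodup (π : Fin n ≃ V) : (Lnd π).Nodup :=
  (List.nodup_finRange n).map π.injective

lemma Lnd_mem (π : Fin n ≃ V) (v : V) : v ∈ Lnd π :=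
  List.mem_map.2 ⟨π.symm v, List.mem_finRange _, π.apply_symm_apply v⟩

lemma Lnd_get (π : Fin n ≃ V) (k : ℕ) (hk : k < (Lnd π).length) :
    (Lnd π).get ⟨k, hk⟩ = π ⟨k, by simpa [Lnd_length] using hk⟩ := by
  simp [Lnd]

lemma rk_lt (π : Fin n ≃ V) (v : V) : rk π v < n := (π.symm v).isLt

lemma rk_pi (π : Fin n ≃ V) (k : Fin n) : rk π (π k) = k := by simp [rk]

lemma rk_pi' (π : Fin n ≃ V) (k : ℕ) (hk : k < n) : rk π (π ⟨k, hk⟩) = k := by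
  simp [rk]

lemma rk_inj (π : Fin n ≃ V) {x y : V} (h : rk π x = rk π y) : x = y := by
  have : π.symm x = π.symm y := Fin.ext h
  exact π.symm.injective this

lemma Lnd_indexOf (π : Fin n ≃ V) (v : V) : (Lnd π).idxOf v = rk π v := by
  have hlen : rk π v < (Lnd π).length := by rw [Lnd_length]; exact rk_lt π v
  have h1 : (Lnd π).get ⟨rk π v, hlen⟩ = v := by
    rw [Lnd_get]
    exact (congrArg π (Fin.ext rfl)).trans (π.apply_symm_apply v)
  have hmem : v ∈ Lnd π := Lnd_mem π v
  have hlt : (Lnd π).idxOf v < (Lnd π).length := List.idxOf_lt_length_iff.2 hmem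
  have h2 : (Lnd π).get ⟨(Lnd π).idxOf v, hlt⟩ = v := List.idxOf_get hlt
  have := (List.Nodup.get_inj_iff (Lnd_nodup π)).1 (h2.trans h1.symm)
  exact congrArg Fin.val this

lemma mem_take_indexOf {l : List V} (hn : l.Nodup) {z : V} {m : ℕ} (h : z ∈ l.take m) :
    l.idxOf z < m := by
  obtain ⟨j, hm, hget⟩ := List.mem_take_iff_getElem.1 h
  have hjl : j < l.length := lt_of_lt_of_le hm (min_le_right _ _)
  have h1 : l.idxOf z = j := by rw [← hget]; exact List.Nodup.idxOf_getElem hn j hjl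
  have h2 := lt_of_lt_of_le hm (min_le_left _ _)
  omega

lemma take_mem_of_indexOf {l : List V} {z : V} {m : ℕ} (hz : z ∈ l)
    (h : l.idxOf z < m) : z ∈ l.take m := by
  have hlt : l.idxOf z < l.length := List.idxOf_lt_length_iff.2 hz
  exact List.mem_take_iff_getElem.2 ⟨l.idxOf z, lt_min h hlt, List.getElem_idxOf hlt⟩

/-- the current graph after the first `k` contractions -/
def Cur (G : SimpleGraph V) (π : Fin n ≃ V) (k : ℕ) : SimpleGraph V :=
  List.foldl chStep G ((Lnd π).take k)

variable {G : SimpleGraph V} {π : Fin n ≃ V}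

lemma cur_le_chGraph {k : ℕ} {x y : V} (h : (Cur G π k).Adj x y) :
    (chGraph G π).Adj x y := by
  have : (chList G ((Lnd π).take k ++ (Lnd π).drop k)).Adj x y :=
    foldl_le_chList_append _ G _ h
  rwa [List.take_append_drop] at this

lemma cur_rank_le {k : ℕ} {x y : V} (h : (Cur G π k).Adj x y) :
    k ≤ rk π x ∧ k ≤ rk π y := by
  constructor
  · by_contra hx
    push_neg at hx
    have : x ∈ (Lnd π).take k :=
      take_mem_of_indexOf (Lnd_mem π x) (by rw [Lnd_indexOf]; omega)
    exact isol_foldl_of_mem _ G this y h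
  · by_contra hy
    push_neg at hy
    have : y ∈ (Lnd π).take k :=
      take_mem_of_indexOf (Lnd_mem π y) (by rw [Lnd_indexOf]; omega)
    exact isol_foldl_of_mem _ G this x h.symm

/-- an edge of the hierarchy is a current edge when its lower endpoint is contracted -/
lemma adj_cur_of_chGraph {x y : V} (h : (chGraph G π).Adj x y) (hr : rk π x < rk π y) :
    (Cur G π (rk π x)).Adj x y := by
  obtain ⟨k, hk, hadj⟩ := chList_adj_exists_prefix _ G h
  rcases le_or_gt k (rk π x) with hkx | hkx
  · -- persist from k to rk π x
    have hsplit : (Lnd π).take (rk π x) =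
        (Lnd π).take k ++ ((Lnd π).take (rk π x)).drop k := by
      conv_lhs => rw [← List.take_append_drop k ((Lnd π).take (rk π x))]
      rw [List.take_take, min_eq_left hkx]
    have hxn : x ∉ ((Lnd π).take (rk π x)).drop k := by
      intro hc
      have := mem_take_indexOf (Lnd_nodup π) (List.mem_of_mem_drop hc)
      rw [Lnd_indexOf] at this; omega
    have hyn : y ∉ ((Lnd π).take (rk π x)).drop k := by
      intro hc
      have := mem_take_indexOf (Lnd_nodup π) (List.mem_of_mem_drop hc)
      rw [Lnd_indexOf] at this; omega
    show (List.foldl chStep G ((Lnd π).take (rk π x))).Adj x y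
    rw [hsplit, List.foldl_append]
    exact adj_foldl_of_adj _ _ hadj hxn hyn
  · exfalso
    have : x ∈ (Lnd π).take k :=
      take_mem_of_indexOf (Lnd_mem π x) (by rw [Lnd_indexOf]; omega)
    exact isol_foldl_of_mem _ G this y hadj

lemma cur_succ (k : ℕ) (hk : k < n) :
    Cur G π (k + 1) = chStep (Cur G π k) (π ⟨k, hk⟩) := by
  have hk' : k < (Lnd π).length := by rw [Lnd_length]; exact hk
  rw [Cur, foldl_take_succ hk', Lnd_get]
  rfl

/-- up-neighbourhoods in the hierarchy are cliques -/
lemma chGraph_clique {x y z : V} (hxy : (chGraph G π).Adj x y) (hxz : (chGraph G π).Adj x z)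
    (hry : rk π x < rk π y) (hrz : rk π x < rk π z) (hyz : y ≠ z) :
    (chGraph G π).Adj y z := by
  have h1 := adj_cur_of_chGraph hxy hry
  have h2 := adj_cur_of_chGraph hxz hrz
  have hx : π ⟨rk π x, rk_lt π x⟩ = x := by
    exact (congrArg π (Fin.ext rfl)).trans (π.apply_symm_apply x)
  have : (Cur G π (rk π x + 1)).Adj y z := by
    rw [cur_succ (rk π x) (rk_lt π x), hx]
    exact ⟨hyz, h1.ne', h2.ne', Or.inr ⟨h1, h2⟩⟩
  exact cur_le_chGraph this
end S3

section S4

variable [DecidableEq V] {n : ℕ} {G : SimpleGraph V} {π : Fin n ≃ V}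

/-- reachability among uncontracted vertices in the current graph -/
def CReach (G : SimpleGraph V) (π : Fin n ≃ V) (k : ℕ) (u w : V) : Prop :=
  Relation.ReflTransGen (fun a b => (Cur G π k).Adj a b ∧ k ≤ rk π a ∧ k ≤ rk π b) u w

lemma cur_zero : Cur G π 0 = G := rfl

lemma creach_lift {k : ℕ} (hk : k < n) {w : V} (hwv : k + 1 ≤ rk π w) {u : V}
    (h : CReach G π k u w) :
    (u ≠ π ⟨k, hk⟩ → k ≤ rk π u → CReach G π (k+1) u w) ∧
    (u = π ⟨k, hk⟩ → ∀ a, (Cur G π k).Adj u a → k + 1 ≤ rk π a → CReach G π (k+1) a w) := by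
  have hrkv : rk π (π ⟨k, hk⟩) = k := rk_pi' π k hk
  have hwne : w ≠ π ⟨k, hk⟩ := fun hc => by rw [hc, hrkv] at hwv; omega
  have promote : ∀ z, z ≠ π ⟨k, hk⟩ → k ≤ rk π z → k + 1 ≤ rk π z := by
    intro z hz hz'
    rcases Nat.lt_or_ge k (rk π z) with h' | h'
    · omega
    · exfalso
      apply hz
      apply rk_inj π
      rw [hrkv]
      omega
  induction h using Relation.ReflTransGen.head_induction_on with
  | refl =>
      refine ⟨fun _ _ => Relation.ReflTransGen.refl, fun hc => absurd hc hwne⟩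
  | @head u x hstep hrest ih =>
      obtain ⟨hadj0, hku0, hkx0⟩ := hstep
      constructor
      · intro huv hku
        have hku1 : k + 1 ≤ rk π u := promote u huv hku
        by_cases hxv : x = π ⟨k, hk⟩
        · exact ih.2 hxv u (by rw [← hxv] at *; exact hadj0.symm) hku1
        · have hkx1 := promote x hxv hkx0
          have hadj : (Cur G π (k+1)).Adj u x := by
            rw [cur_succ k hk]
            exact ⟨hadj0.ne, huv, hxv, Or.inl hadj0⟩
          exact Relation.ReflTransGen.head ⟨hadj, hku1, hkx1⟩ (ih.1 hxv hkx0)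
      · intro huv a hadja hka
        have hxv : x ≠ π ⟨k, hk⟩ := by rw [← huv]; exact hadj0.ne'
        have hkx1 := promote x hxv hkx0
        by_cases hax : a = x
        · subst hax; exact ih.1 hxv hkx0
        · have hadj' : (Cur G π (k+1)).Adj a x := by
            rw [cur_succ k hk]
            refine ⟨hax, ?_, hxv, Or.inr ⟨by rwa [huv] at hadja, by rwa [huv] at hadj0⟩⟩
            intro hc
            rw [hc, hrkv] at hka
            omega
          exact Relation.ReflTransGen.head ⟨hadj', hka, hkx1⟩ (ih.1 hxv hkx0)

lemma creach_all (hG : G.Connected) : ∀ k u w, k ≤ rk π u → k ≤ rk π w → CReach G π k u w := by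
  intro k
  induction k with
  | zero =>
      intro u w _ _
      have : Relation.ReflTransGen G.Adj u w :=
        (G.reachable_iff_reflTransGen u w).1 (hG.preconnected u w)
      exact Relation.ReflTransGen.mono (p := fun a b => (Cur G π 0).Adj a b ∧ 0 ≤ rk π a ∧ 0 ≤ rk π b) (fun a b h => ⟨h, Nat.zero_le _, Nat.zero_le _⟩) u w this
  | succ k ih =>
      intro u w hu hw
      have hk : k < n := lt_of_lt_of_le (Nat.lt_of_lt_of_le (Nat.lt_succ_self k) hu) (Nat.le_of_lt (rk_lt π u))
      have h0 : CReach G π k u w := ih u w (by omega) (by omega)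
      have huv : u ≠ π ⟨k, hk⟩ := by
        intro hc
        rw [hc, rk_pi' π k hk] at hu
        omega
      exact (creach_lift hk hw h0).1 huv (by omega)

/-- every vertex except the top one has an up-neighbour in the hierarchy -/
lemma exists_up_neighbor (hG : G.Connected) {x : V} (hx : rk π x < n - 1) :
    ∃ y, (chGraph G π).Adj x y ∧ rk π x < rk π y := by
  have hn : 1 < n := by
    have := rk_lt π x
    omega
  have hxw : x ≠ π ⟨n - 1, by omega⟩ := by
    intro hc
    rw [hc, rk_pi' π (n-1) (by omega)] at hx
    omega
  have h := creach_all hG (rk π x) x (π ⟨n - 1, by omega⟩) (le_refl _) (by rw [rk_pi' π (n-1) (by omega)]; omega)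
  rcases Relation.ReflTransGen.cases_head h with hc | ⟨y, ⟨hadj, _, hky⟩, _⟩
  · exact absurd hc hxw
  · refine ⟨y, cur_le_chGraph hadj, ?_⟩
    have : rk π y ≠ rk π x := fun hc => hadj.ne' (rk_inj π hc)
    omega

end S4

section S5

variable [Fintype V] [DecidableEq V] {n : ℕ}

/-- the set of up-neighbours in the hierarchy -/
noncomputable def up (G : SimpleGraph V) (π : Fin n ≃ V) (x : V) : Finset V :=
  @Finset.filter _ (fun y => (chGraph G π).Adj x y ∧ rk π x < rk π y)
    (Classical.decPred _) Finset.univ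

lemma mem_up {G : SimpleGraph V} {π : Fin n ≃ V} {x y : V} :
    y ∈ up G π x ↔ (chGraph G π).Adj x y ∧ rk π x < rk π y := by
  rw [up]
  exact (@Finset.mem_filter _ _ (Classical.decPred _) _ _).trans (by simp)

/-- the parent in the elimination tree: the up-neighbour of minimum rank -/
noncomputable def parent (G : SimpleGraph V) (π : Fin n ≃ V) (x : V) : V :=
  if h : (up G π x).Nonempty then
    Classical.choose (Finset.exists_min_image (up G π x) (rk π) h)
  else x

variable {G : SimpleGraph V} {π : Fin n ≃ V}

lemma parent_spec {x : V} (h : (up G π x).Nonempty) :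
    parent G π x ∈ up G π x ∧ ∀ y ∈ up G π x, rk π (parent G π x) ≤ rk π y := by
  rw [parent, dif_pos h]
  obtain ⟨h1, h2⟩ := Classical.choose_spec (Finset.exists_min_image (up G π x) (rk π) h)
  exact ⟨h1, h2⟩

lemma parent_eq_self {x : V} (h : ¬ (up G π x).Nonempty) : parent G π x = x := dif_neg h

lemma parent_cases (x : V) :
    parent G π x = x ∨ ((chGraph G π).Adj x (parent G π x) ∧ rk π x < rk π (parent G π x)) := by
  by_cases h : (up G π x).Nonempty
  · exact Or.inr (mem_up.1 (parent_spec h).1)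
  · exact Or.inl (parent_eq_self h)

lemma rk_parent_le {x : V} : rk π x ≤ rk π (parent G π x) := by
  rcases parent_cases (G := G) (π := π) x with h | h
  · rw [h]
  · omega

lemma iterate_rank (i : ℕ) (v : V) :
    (parent G π)^[i] v = v ∨ rk π v < rk π ((parent G π)^[i] v) := by
  induction i with
  | zero => exact Or.inl rfl
  | succ i ih =>
      rw [Function.iterate_succ_apply']
      rcases ih with h | h
      · rw [h]; exact (parent_cases v).imp id (fun h' => h'.2)
      · rcases parent_cases (G := G) (π := π) ((parent G π)^[i] v) with h' | h'
        · rw [h']; exact Or.inr h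
        · exact Or.inr (lt_trans h h'.2)

/-- the hierarchy's edges connect comparable vertices of the elimination tree -/
lemma adj_anc : ∀ d x y, rk π y - rk π x = d → (chGraph G π).Adj x y → rk π x < rk π y →
    ∃ i, 0 < i ∧ (parent G π)^[i] x = y := by
  intro d
  induction d using Nat.strong_induction_on with
  | _ d ih =>
    intro x y hd hadj hr
    have hy : y ∈ up G π x := mem_up.2 ⟨hadj, hr⟩
    have hne : (up G π x).Nonempty := ⟨y, hy⟩
    obtain ⟨hpmem, hpmin⟩ := parent_spec hne
    obtain ⟨hpadj, hpr⟩ := mem_up.1 hpmem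
    by_cases hpy : parent G π x = y
    · exact ⟨1, Nat.one_pos, by simpa using hpy⟩
    · have hple : rk π (parent G π x) ≤ rk π y := hpmin y hy
      have hplt : rk π (parent G π x) < rk π y := by
        rcases lt_or_eq_of_le hple with h | h
        · exact h
        · exact absurd (rk_inj π h) hpy
      have hadj' : (chGraph G π).Adj (parent G π x) y :=
        chGraph_clique hpadj hadj hpr hr hpy
      obtain ⟨i, hi0, hieq⟩ := ih (rk π y - rk π (parent G π x)) (by omega)
        (parent G π x) y rfl hadj' hplt
      exact ⟨i + 1, Nat.succ_pos _, by rw [Function.iterate_succ_apply]; exact hieq⟩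

/-- search space = ancestors in the elimination tree -/
lemma upReach_iff {x u : V} :
    UpReach G π x u ↔ ∃ i, (parent G π)^[i] x = u := by
  constructor
  · intro h
    induction h with
    | refl => exact ⟨0, rfl⟩
    | tail hstep hlast ih =>
        obtain ⟨i, hi⟩ := ih
        obtain ⟨hadj, hr⟩ := hlast
        obtain ⟨j, _, hj⟩ := adj_anc _ _ _ rfl hadj hr
        exact ⟨j + i, by rw [Function.iterate_add_apply, hi, hj]⟩
  · rintro ⟨i, rfl⟩
    induction i with
    | zero => exact Relation.ReflTransGen.refl
    | succ i ih =>
        rw [Function.iterate_succ_apply']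
        rcases parent_cases (G := G) (π := π) ((parent G π)^[i] x) with h | h
        · rw [h]; exact ih
        · exact Relation.ReflTransGen.tail ih h

/-- descendants (the subtree) of a vertex in the elimination tree -/
noncomputable def Dset (G : SimpleGraph V) (π : Fin n ≃ V) (a : V) : Finset V :=
  @Finset.filter _ (fun v => ∃ i, (parent G π)^[i] v = a) (Classical.decPred _) Finset.univ

lemma mem_Dset {a v : V} : v ∈ Dset G π a ↔ ∃ i, (parent G π)^[i] v = a := by
  rw [Dset]
  exact (@Finset.mem_filter _ _ (Classical.decPred _) _ _).trans (by simp)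

lemma self_mem_Dset (a : V) : a ∈ Dset G π a := mem_Dset.2 ⟨0, rfl⟩

lemma Dset_rank {a v : V} (h : v ∈ Dset G π a) : v = a ∨ rk π v < rk π a := by
  obtain ⟨i, hi⟩ := mem_Dset.1 h
  rcases iterate_rank (G := G) (π := π) i v with h' | h'
  · left; rw [← hi, h']
  · right; rwa [hi] at h'

lemma Dset_trans {a c v : V} (h1 : v ∈ Dset G π c) (h2 : c ∈ Dset G π a) :
    v ∈ Dset G π a := by
  obtain ⟨i, hi⟩ := mem_Dset.1 h1
  obtain ⟨j, hj⟩ := mem_Dset.1 h2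
  exact mem_Dset.2 ⟨j + i, by rw [Function.iterate_add_apply, hi, hj]⟩

lemma Dset_top (hG : G.Connected) (hn : 0 < n) :
    Dset G π (π ⟨n - 1, by omega⟩) = Finset.univ := by
  ext v
  simp only [Finset.mem_univ, iff_true]
  rw [mem_Dset]
  -- strong induction on n - 1 - rk π v
  suffices h : ∀ d v, n - 1 - rk π v = d → ∃ i, (parent G π)^[i] v = π ⟨n - 1, by omega⟩ by
    exact h _ v rfl
  intro d
  induction d using Nat.strong_induction_on with
  | _ d ih =>
    intro v hd
    rcases eq_or_lt_of_le (by have := rk_lt π v; omega : rk π v ≤ n - 1) with heq | hlt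
    · refine ⟨0, ?_⟩
      show v = _
      apply rk_inj π
      rw [rk_pi' π (n-1) (by omega), heq]
    · obtain ⟨y, hadj, hr⟩ := exists_up_neighbor hG hlt
      have hne : (up G π v).Nonempty := ⟨y, mem_up.2 ⟨hadj, hr⟩⟩
      have hpr : rk π v < rk π (parent G π v) := (mem_up.1 (parent_spec hne).1).2
      obtain ⟨i, hi⟩ := ih (n - 1 - rk π (parent G π v)) (by omega) (parent G π v) rfl
      exact ⟨i + 1, by rw [Function.iterate_add_apply]; simpa using hi⟩

/-- two ancestors of the same vertex are comparable -/
lemma anc_comparable {v b c : V} {i j : ℕ} (hij : i ≤ j)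
    (hb : (parent G π)^[i] v = b) (hc : (parent G π)^[j] v = c) :
    (parent G π)^[j - i] b = c := by
  rw [← hc, ← hb, ← Function.iterate_add_apply]
  congr 1
  omega

end S5

section S6

variable [Fintype V] [DecidableEq V] {n : ℕ} {G : SimpleGraph V} {π : Fin n ≃ V}

lemma G_le_chGraph {x y : V} (h : G.Adj x y) : (chGraph G π).Adj x y :=
  le_chList _ G h

lemma parent_child_rk {c a : V} (hc : parent G π c = a) (hne : c ≠ a) :
    rk π c < rk π a := by
  rcases parent_cases (G := G) (π := π) c with h | h
  · rw [hc] at h; exact absurd h.symm hne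
  · rw [hc] at h; exact h.2

lemma child_subtree {c a : V} (hc : parent G π c = a) :
    Dset G π c ⊆ Dset G π a := fun v hv =>
  Dset_trans hv (mem_Dset.2 ⟨1, by simpa using hc⟩)

lemma a_not_mem_child {c a : V} (hc : parent G π c = a) (hne : c ≠ a) :
    a ∉ Dset G π c := by
  intro h
  rcases Dset_rank h with h' | h'
  · exact hne h'.symm
  · have := parent_child_rk hc hne
    omega

lemma anc_of_a_not_child {c a y : V} (hc : parent G π c = a) (hne : c ≠ a)
    (hy : y ∈ Dset G π c) {t : ℕ} (ht : (parent G π)^[t] a = y) : False := by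
  rcases iterate_rank (G := G) (π := π) t a with h | h
  · rw [ht] at h
    exact a_not_mem_child hc hne (h ▸ hy)
  · rw [ht] at h
    have hrc := parent_child_rk hc hne
    rcases Dset_rank hy with h' | h'
    · rw [h'] at h; omega
    · omega

lemma children_disjoint {a c c' : V} (hc : parent G π c = a) (hne : c ≠ a)
    (hc' : parent G π c' = a) (hne' : c' ≠ a) (hcc : c ≠ c') :
    Disjoint (Dset G π c) (Dset G π c') := by
  rw [Finset.disjoint_left]
  intro v hv hv'
  obtain ⟨i, hi⟩ := mem_Dset.1 hv
  obtain ⟨j, hj⟩ := mem_Dset.1 hv'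
  rcases le_total i j with hij | hij
  · have h := anc_comparable hij hi hj
    rcases Nat.eq_zero_or_pos (j - i) with h0 | h0
    · rw [h0] at h; exact hcc h
    · have : (parent G π)^[j - i] c = (parent G π)^[j - i - 1] a := by
        have : j - i = (j - i - 1) + 1 := by omega
        rw [this, Function.iterate_add_apply]
        simp [hc]
      rw [this] at h
      exact anc_of_a_not_child hc' hne' (self_mem_Dset c') h
  · have h := anc_comparable hij hj hi
    rcases Nat.eq_zero_or_pos (i - j) with h0 | h0
    · rw [h0] at h; exact hcc h.symm
    · have : (parent G π)^[i - j] c' = (parent G π)^[i - j - 1] a := by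
        have : i - j = (i - j - 1) + 1 := by omega
        rw [this, Function.iterate_add_apply]
        simp [hc']
      rw [this] at h
      exact anc_of_a_not_child hc hne (self_mem_Dset c) h

lemma exists_child {a v : V} (hv : v ∈ Dset G π a) (hne : v ≠ a) :
    ∃ c, parent G π c = a ∧ c ≠ a ∧ v ∈ Dset G π c := by
  obtain ⟨i, hi⟩ := mem_Dset.1 hv
  induction i generalizing v with
  | zero => exact absurd hi hne
  | succ i ih =>
      rw [Function.iterate_succ_apply'] at hi
      by_cases hu : (parent G π)^[i] v = a
      · exact ih hv hne hu
      · exact ⟨(parent G π)^[i] v, hi, hu, mem_Dset.2 ⟨i, rfl⟩⟩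

lemma up_not_mem_Dset {a y : V} (hy : y ∈ up G π a) : y ∉ Dset G π a := by
  intro h
  obtain ⟨-, hr⟩ := mem_up.1 hy
  rcases Dset_rank h with h' | h'
  · rw [h'] at hr; omega
  · omega

/-- attachment lemma: hierarchy edges leaving a subtree land in the up-neighbourhood
of its root -/
lemma attach {a : V} : ∀ i x, (parent G π)^[i] x = a → ∀ y, (chGraph G π).Adj x y →
    y ∉ Dset G π a → y ∈ up G π a := by
  intro i
  induction i using Nat.strong_induction_on with
  | _ i ih =>
    intro x hx y hadj hyd
    have hxm : x ∈ Dset G π a := mem_Dset.2 ⟨i, hx⟩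
    -- first, y must be above x
    have hrxy : rk π x < rk π y := by
      rcases Nat.lt_trichotomy (rk π x) (rk π y) with h | h | h
      · exact h
      · exact absurd (rk_inj π h) hadj.ne
      · exfalso
        obtain ⟨j, -, hj⟩ := adj_anc _ y x rfl hadj.symm h
        exact hyd (Dset_trans (mem_Dset.2 ⟨j, hj⟩) hxm)
    by_cases hxa : x = a
    · exact mem_up.2 ⟨hxa ▸ hadj, hxa ▸ hrxy⟩
    · -- x ≠ a, so i ≥ 1 and parent x is in the subtree
      have hi0 : 0 < i := by
        rcases Nat.eq_zero_or_pos i with h0 | h0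
        · rw [h0] at hx; exact absurd hx hxa
        · exact h0
      have hpx : (parent G π)^[i - 1] (parent G π x) = a := by
        have : i = (i - 1) + 1 := by omega
        rw [this, Function.iterate_succ_apply] at hx
        exact hx
      have hupne : (up G π x).Nonempty := ⟨y, mem_up.2 ⟨hadj, hrxy⟩⟩
      obtain ⟨hpmem, hpmin⟩ := parent_spec hupne
      obtain ⟨hpadj, hpr⟩ := mem_up.1 hpmem
      have hpDset : parent G π x ∈ Dset G π a := mem_Dset.2 ⟨i - 1, hpx⟩
      have hyp : y ≠ parent G π x := fun hc => hyd (hc ▸ hpDset)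
      have hple : rk π (parent G π x) ≤ rk π y := hpmin y (mem_up.2 ⟨hadj, hrxy⟩)
      have hplt : rk π (parent G π x) < rk π y := by
        rcases lt_or_eq_of_le hple with h | h
        · exact h
        · exact absurd (rk_inj π h).symm hyp
      have hadj' : (chGraph G π).Adj (parent G π x) y :=
        chGraph_clique hpadj hadj hpr hrxy (fun hc => hyp hc.symm)
      exact ih (i - 1) (by omega) (parent G π x) hpx y hadj' hyd

/-- crossing between two different child subtrees is impossible -/
lemma cross_children {a c c' x y : V} (hc : parent G π c = a) (hnec : c ≠ a)
    (hc' : parent G π c' = a) (hnec' : c' ≠ a) (hcc : c ≠ c')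
    (hx : x ∈ Dset G π c) (hy : y ∈ Dset G π c')
    (hadj : (chGraph G π).Adj x y) (hr : rk π x < rk π y) : False := by
  obtain ⟨jj, hjj0, hjj⟩ := adj_anc _ x y rfl hadj hr
  obtain ⟨m, hm⟩ := mem_Dset.1 hx
  rcases le_total jj m with hle | hle
  · have h := anc_comparable hle hjj hm
    have : y ∈ Dset G π c := mem_Dset.2 ⟨m - jj, h⟩
    exact (Finset.disjoint_left.1 (children_disjoint hc hnec hc' hnec' hcc)) this hy
  · have h := anc_comparable hle hm hjj
    rcases Nat.eq_zero_or_pos (jj - m) with h0 | h0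
    · rw [h0] at h
      simp only [Function.iterate_zero, id_eq] at h
      subst h
      exact (Finset.disjoint_left.1 (children_disjoint hc hnec hc' hnec' hcc))
        (self_mem_Dset c) hy
    · have : (parent G π)^[jj - m] c = (parent G π)^[jj - m - 1] a := by
        have : jj - m = (jj - m - 1) + 1 := by omega
        rw [this, Function.iterate_add_apply]
        simp [hc]
      rw [this] at h
      exact anc_of_a_not_child hc' hnec' hy h

end S6

section S7

/-- packing: pieces of size at most 2N/3 with total at most N can be split in two
halves of size at most 2N/3 each. -/
lemma pack {ι : Type*} [DecidableEq ι] (s : Finset ι) (f : ι → ℕ) (N : ℕ)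
    (hf : ∀ i ∈ s, 3 * f i ≤ 2 * N) (ht : ∑ i ∈ s, f i ≤ N) :
    ∃ I ⊆ s, 3 * (∑ i ∈ I, f i) ≤ 2 * N ∧ 3 * (∑ i ∈ s \ I, f i) ≤ 2 * N := by
  classical
  set P := s.powerset.filter (fun I => 3 * ∑ i ∈ I, f i ≤ 2 * N) with hP
  have hPne : P.Nonempty := ⟨∅, by simp [hP]⟩
  obtain ⟨I, hIP, hImax⟩ := Finset.exists_max_image P (fun I => ∑ i ∈ I, f i) hPne
  rw [hP, Finset.mem_filter, Finset.mem_powerset] at hIP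
  obtain ⟨hIs, hIb⟩ := hIP
  refine ⟨I, hIs, hIb, ?_⟩
  by_contra hJ
  push_neg at hJ
  have hsplit : ∑ i ∈ s \ I, f i + ∑ i ∈ I, f i = ∑ i ∈ s, f i :=
    Finset.sum_sdiff hIs
  have hmaxP : ∀ p ∈ s \ I, 0 < f p → 2 * N < 3 * (f p + ∑ i ∈ I, f i) := by
    intro p hp hfp
    by_contra hc
    push_neg at hc
    have hpI : p ∉ I := (Finset.mem_sdiff.1 hp).2
    have hins : insert p I ∈ P := by
      rw [hP, Finset.mem_filter, Finset.mem_powerset]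
      constructor
      · exact Finset.insert_subset (Finset.mem_sdiff.1 hp).1 hIs
      · rwa [Finset.sum_insert hpI]
    have := hImax _ hins
    rw [Finset.sum_insert hpI] at this
    omega
  have hsing : ∀ p ∈ s \ I, f p ≤ ∑ i ∈ I, f i := by
    intro p hp
    have hins : ({p} : Finset ι) ∈ P := by
      rw [hP, Finset.mem_filter, Finset.mem_powerset]
      exact ⟨Finset.singleton_subset_iff.2 (Finset.mem_sdiff.1 hp).1, by
        rw [Finset.sum_singleton]; exact hf p (Finset.mem_sdiff.1 hp).1⟩
    have := hImax _ hins
    rwa [Finset.sum_singleton] at this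
  have hpex : ∃ p ∈ s \ I, 0 < f p := by
    by_contra h'
    push_neg at h'
    have : ∑ i ∈ s \ I, f i = 0 := Finset.sum_eq_zero (fun i hi => by
      have := h' i hi; omega)
    omega
  obtain ⟨p, hp, hfp⟩ := hpex
  have hqex : ∃ q ∈ s \ I, q ≠ p ∧ 0 < f q := by
    by_contra h'
    push_neg at h'
    have : ∑ i ∈ s \ I, f i = f p := by
      apply Finset.sum_eq_single_of_mem p hp
      intro q hq hqp
      have := h' q hq hqp
      omega
    rw [this] at hJ
    have := hf p (Finset.mem_sdiff.1 hp).1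
    omega
  obtain ⟨q, hq, hqp, hfq⟩ := hqex
  have h1 := hmaxP p hp hfp
  have h2 := hmaxP q hq hfq
  have h3 := hsing p hp
  have h4 := hsing q hq
  have h5 : f p + f q ≤ ∑ i ∈ s \ I, f i := by
    have : ({p, q} : Finset ι) ⊆ s \ I := by
      intro z hz
      rcases Finset.mem_insert.1 hz with rfl | hz
      · exact hp
      · rw [Finset.mem_singleton.1 hz]; exact hq
    have := Finset.sum_le_sum_of_subset (f := f) this
    rwa [Finset.sum_pair (fun hc => hqp hc.symm)] at this
  omega

end S7

section S8

variable [Fintype V] [DecidableEq V] {n : ℕ} {G : SimpleGraph V} {π : Fin n ≃ V}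

lemma exists_sep (hG : G.Connected) (hn : 0 < n) (hcard : Fintype.card V = n) :
    ∃ a : V, IsBalancedSepOn G Finset.univ (insert a (up G π a)) ∧
      2 * n < 3 * (Dset G π a).card ∧
      (∀ s ∈ insert a (up G π a), ∀ t ∈ insert a (up G π a), s ≠ t →
        (chGraph G π).Adj s t) ∧
      (∀ v ∈ Dset G π a, ∀ s ∈ insert a (up G π a), UpReach G π v s) := by
  classical
  have htop : 2 * n < 3 * (Dset G π (π ⟨n - 1, by omega⟩)).card := by
    rw [Dset_top hG hn, Finset.card_univ, hcard]; omega
  set bigs := Finset.univ.filter (fun a : V => 2 * n < 3 * (Dset G π a).card) with hbigs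
  have hbne : bigs.Nonempty := ⟨π ⟨n - 1, by omega⟩, by
    rw [hbigs, Finset.mem_filter]; exact ⟨Finset.mem_univ _, htop⟩⟩
  obtain ⟨a, haP, hamin⟩ := Finset.exists_min_image bigs (fun a => (Dset G π a).card) hbne
  rw [hbigs, Finset.mem_filter] at haP
  have haD : 2 * n < 3 * (Dset G π a).card := haP.2
  set S := insert a (up G π a) with hS
  have haS : a ∈ S := Finset.mem_insert_self _ _
  have hupS : up G π a ⊆ S := Finset.subset_insert _ _
  -- children subtrees are small
  have hchild_small : ∀ c, parent G π c = a → c ≠ a → 3 * (Dset G π c).card ≤ 2 * n := by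
    intro c hc hne
    by_contra h'
    push_neg at h'
    have hcbigs : c ∈ bigs := by
      rw [hbigs, Finset.mem_filter]; exact ⟨Finset.mem_univ _, h'⟩
    have h1 := hamin c hcbigs
    have h2 : (Dset G π c).card < (Dset G π a).card := by
      apply Finset.card_lt_card
      rw [Finset.ssubset_iff_of_subset (child_subtree hc)]
      exact ⟨a, self_mem_Dset a, a_not_mem_child hc hne⟩
    omega
  -- pieces
  set piece : Option V → Finset V :=
    (fun o => o.elim (Finset.univ \ Dset G π a) (fun c => Dset G π c)) with hpiece
  set C := Finset.univ.filter (fun c : V => parent G π c = a ∧ c ≠ a) with hC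
  have hCmem : ∀ c, c ∈ C ↔ (parent G π c = a ∧ c ≠ a) := by
    intro c; rw [hC, Finset.mem_filter]; simp
  set sidx : Finset (Option V) := insert none (C.image some) with hsidx
  have hsidx_mem : ∀ o, o ∈ sidx ↔ (o = none ∨ ∃ c ∈ C, o = some c) := by
    intro o
    rw [hsidx, Finset.mem_insert, Finset.mem_image]
    constructor
    · rintro (h | ⟨c, hc, rfl⟩)
      · exact Or.inl h
      · exact Or.inr ⟨c, hc, rfl⟩
    · rintro (h | ⟨c, hc, rfl⟩)
      · exact Or.inl h
      · exact Or.inr ⟨c, hc, rfl⟩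
  have hOcard : 3 * (Finset.univ \ Dset G π a).card ≤ 2 * n := by
    have h1 : (Finset.univ \ Dset G π a).card = n - (Dset G π a).card := by
      rw [Finset.card_sdiff_of_subset (Finset.subset_univ _), Finset.card_univ, hcard]
    have h2 : (Dset G π a).card ≤ n := by
      have := Finset.card_le_univ (Dset G π a)
      rwa [hcard] at this
    omega
  have hf : ∀ i ∈ sidx, 3 * (piece i).card ≤ 2 * n := by
    intro i hi
    rcases (hsidx_mem i).1 hi with rfl | ⟨c, hc, rfl⟩
    · exact hOcard
    · exact hchild_small c ((hCmem c).1 hc).1 ((hCmem c).1 hc).2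
  have hdisj : ∀ i ∈ sidx, ∀ j ∈ sidx, i ≠ j → Disjoint (piece i) (piece j) := by
    intro i hi j hj hij
    have hON : ∀ c, parent G π c = a → Disjoint (Finset.univ \ Dset G π a) (Dset G π c) := by
      intro c hc
      rw [Finset.disjoint_left]
      intro v hv hv'
      exact (Finset.mem_sdiff.1 hv).2 (child_subtree hc hv')
    rcases (hsidx_mem i).1 hi with rfl | ⟨c, hc, rfl⟩ <;>
      rcases (hsidx_mem j).1 hj with rfl | ⟨c', hc', rfl⟩
    · exact absurd rfl hij
    · exact hON c' ((hCmem c').1 hc').1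
    · exact (hON c ((hCmem c).1 hc).1).symm
    · have hcc : c ≠ c' := fun h => hij (by rw [h])
      exact children_disjoint ((hCmem c).1 hc).1 ((hCmem c).1 hc).2
        ((hCmem c').1 hc').1 ((hCmem c').1 hc').2 hcc
  have htot : ∑ i ∈ sidx, (piece i).card ≤ n := by
    rw [← Finset.card_biUnion hdisj]
    have := Finset.card_le_univ (sidx.biUnion piece)
    rwa [hcard] at this
  obtain ⟨I, hIsub, hIA, hIB⟩ := pack sidx (fun i => (piece i).card) n hf htot
  set A := (I.biUnion piece) \ S with hA
  set B := ((sidx \ I).biUnion piece) \ S with hB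
  -- cross non-adjacency
  have cross : ∀ i ∈ sidx, ∀ j ∈ sidx, i ≠ j → ∀ x ∈ piece i, x ∉ S →
      ∀ y ∈ piece j, y ∉ S → ¬ (chGraph G π).Adj x y := by
    have hsome_none : ∀ c ∈ C, ∀ x ∈ piece (some c), x ∉ S →
        ∀ y ∈ piece (none : Option V), y ∉ S → ¬ (chGraph G π).Adj x y := by
      intro c hc x hx hxS y hy hyS hadj
      obtain ⟨hcp, hcne⟩ := (hCmem c).1 hc
      have hxa : x ∈ Dset G π a := child_subtree hcp hx
      obtain ⟨i, hi⟩ := mem_Dset.1 hxa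
      have hyd : y ∉ Dset G π a := (Finset.mem_sdiff.1 hy).2
      exact hyS (hupS (attach i x hi y hadj hyd))
    intro i hi j hj hij x hx hxS y hy hyS hadj
    rcases (hsidx_mem i).1 hi with rfl | ⟨c, hc, rfl⟩ <;>
      rcases (hsidx_mem j).1 hj with rfl | ⟨c', hc', rfl⟩
    · exact absurd rfl hij
    · exact hsome_none c' hc' y hy hyS x hx hxS hadj.symm
    · exact hsome_none c hc x hx hxS y hy hyS hadj
    · have hcc : c ≠ c' := fun h => hij (by rw [h])
      obtain ⟨hcp, hcne⟩ := (hCmem c).1 hc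
      obtain ⟨hcp', hcne'⟩ := (hCmem c').1 hc'
      rcases Nat.lt_trichotomy (rk π x) (rk π y) with h | h | h
      · exact cross_children hcp hcne hcp' hcne' hcc hx hy hadj h
      · exact hadj.ne (rk_inj π h)
      · exact cross_children hcp' hcne' hcp hcne (Ne.symm hcc) hy hx hadj.symm h
  refine ⟨a, ⟨Finset.subset_univ _, A, B, Finset.subset_univ _, Finset.subset_univ _,
    ?_, Finset.sdiff_disjoint, Finset.sdiff_disjoint, ?_, ?_, ?_, ?_⟩, haD, ?_, ?_⟩
  · -- Disjoint A B
    rw [Finset.disjoint_left]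
    intro x hxA hxB
    obtain ⟨hx1, hxS⟩ := Finset.mem_sdiff.1 hxA
    obtain ⟨hx2, -⟩ := Finset.mem_sdiff.1 hxB
    obtain ⟨i, hiI, hxi⟩ := Finset.mem_biUnion.1 hx1
    obtain ⟨j, hjJ, hxj⟩ := Finset.mem_biUnion.1 hx2
    have hij : i ≠ j := by
      rintro rfl
      exact (Finset.mem_sdiff.1 hjJ).2 hiI
    exact Finset.disjoint_left.1
      (hdisj i (hIsub hiI) j (Finset.mem_sdiff.1 hjJ).1 hij) hxi hxj
  · -- union
    apply Finset.eq_univ_of_forall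
    intro v
    by_cases hvS : v ∈ S
    · exact Finset.mem_union_right _ hvS
    · have hAB : ∀ o ∈ sidx, v ∈ piece o → v ∈ A ∪ B ∪ S := by
        intro o ho hvp
        by_cases hoI : o ∈ I
        · exact Finset.mem_union_left _ (Finset.mem_union_left _
            (Finset.mem_sdiff.2 ⟨Finset.mem_biUnion.2 ⟨o, hoI, hvp⟩, hvS⟩))
        · exact Finset.mem_union_left _ (Finset.mem_union_right _
            (Finset.mem_sdiff.2 ⟨Finset.mem_biUnion.2
              ⟨o, Finset.mem_sdiff.2 ⟨ho, hoI⟩, hvp⟩, hvS⟩))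
      by_cases hvD : v ∈ Dset G π a
      · have hva : v ≠ a := fun h => hvS (h ▸ haS)
        obtain ⟨c, hcp, hcne, hvc⟩ := exists_child hvD hva
        have hcC : c ∈ C := (hCmem c).2 ⟨hcp, hcne⟩
        exact hAB (some c) ((hsidx_mem _).2 (Or.inr ⟨c, hcC, rfl⟩)) hvc
      · exact hAB none ((hsidx_mem _).2 (Or.inl rfl))
          (Finset.mem_sdiff.2 ⟨Finset.mem_univ _, hvD⟩)
  · -- non-adjacency between the two sides
    intro x hxA y hyB hadj
    obtain ⟨hx1, hxS⟩ := Finset.mem_sdiff.1 hxA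
    obtain ⟨hy1, hyS⟩ := Finset.mem_sdiff.1 hyB
    obtain ⟨i, hiI, hxi⟩ := Finset.mem_biUnion.1 hx1
    obtain ⟨j, hjJ, hyj⟩ := Finset.mem_biUnion.1 hy1
    have hij : i ≠ j := by
      rintro rfl
      exact (Finset.mem_sdiff.1 hjJ).2 hiI
    exact cross i (hIsub hiI) j (Finset.mem_sdiff.1 hjJ).1 hij x hxi hxS y hyj hyS
      (G_le_chGraph hadj)
  · -- size of A
    have h1 : A.card ≤ ∑ i ∈ I, (piece i).card :=
      le_trans (Finset.card_le_card Finset.sdiff_subset) Finset.card_biUnion_le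
    rw [Finset.card_univ, hcard]
    omega
  · -- size of B
    have h1 : B.card ≤ ∑ i ∈ sidx \ I, (piece i).card :=
      le_trans (Finset.card_le_card Finset.sdiff_subset) Finset.card_biUnion_le
    rw [Finset.card_univ, hcard]
    omega
  · -- clique
    intro s hs t ht hst
    rcases Finset.mem_insert.1 hs with rfl | hs' <;>
      rcases Finset.mem_insert.1 ht with rfl | ht'
    · exact absurd rfl hst
    · exact (mem_up.1 ht').1
    · exact ((mem_up.1 hs').1).symm
    · exact chGraph_clique (mem_up.1 hs').1 (mem_up.1 ht').1 (mem_up.1 hs').2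
        (mem_up.1 ht').2 hst
  · -- reachability from the subtree
    intro v hv s hsmem
    have hva : UpReach G π v a := upReach_iff.2 (mem_Dset.1 hv)
    rcases Finset.mem_insert.1 hsmem with rfl | hs'
    · exact hva
    · exact Relation.ReflTransGen.tail hva ⟨(mem_up.1 hs').1, (mem_up.1 hs').2⟩

end S8

section S9

variable [DecidableEq V] {G : SimpleGraph V} {c α : ℝ}

/-- "low-walk edge": a walk between two vertices of the list whose inner vertices are
all contracted before the (earlier) endpoint. -/
def LWE (G : SimpleGraph V) (l : List V) (x y : V) : Prop :=
  x ∈ l ∧ y ∈ l ∧ l.idxOf x < l.idxOf y ∧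
  ∃ zs : List V, List.Chain G.Adj x (zs ++ [y]) ∧
    ∀ z ∈ zs, z ∈ l ∧ l.idxOf z < l.idxOf x

lemma idx_lt_len {l₁ l₂ : List V} {z : V} (h : z ∈ l₁) :
    (l₁ ++ l₂).idxOf z < l₁.length := by
  rw [List.idxOf_append_of_mem h]
  exact List.idxOf_lt_length_iff.2 h

lemma mem_left_of_idx {l₁ l₂ : List V} {z : V} (hz : z ∈ l₁ ++ l₂)
    (h : (l₁ ++ l₂).idxOf z < l₁.length) : z ∈ l₁ := by
  by_cases hz1 : z ∈ l₁
  · exact hz1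
  · rw [List.idxOf_append_of_notMem hz1] at h
    omega

lemma nd_toFinset : ∀ {U : Finset V} {l : List V}, IsNDOrder G c α U l →
    l.toFinset = U ∧ l.Nodup := by
  intro U l h
  induction h with
  | empty => simp
  | @step U S A B lA lB lS hAB hAS hBS hUnion hadjAB hcA hcB hSc hndS htS hA hB ihA ihB =>
      obtain ⟨htA, hndA⟩ := ihA
      obtain ⟨htB, hndB⟩ := ihB
      have hmemA : ∀ z, z ∈ lA ↔ z ∈ A := fun z => by rw [← htA, List.mem_toFinset]
      have hmemB : ∀ z, z ∈ lB ↔ z ∈ B := fun z => by rw [← htB, List.mem_toFinset]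
      have hmemS : ∀ z, z ∈ lS ↔ z ∈ S := fun z => by rw [← htS, List.mem_toFinset]
      constructor
      · rw [List.toFinset_append, List.toFinset_append, htA, htB, htS]
        exact hUnion
      · refine List.Nodup.append (List.Nodup.append hndA hndB ?_) hndS ?_
        · intro z hzA hzB
          exact Finset.disjoint_left.1 hAB ((hmemA z).1 hzA) ((hmemB z).1 hzB)
        · intro z hz hzS
          rcases List.mem_append.1 hz with hzA | hzB
          · exact Finset.disjoint_left.1 hAS ((hmemA z).1 hzA) ((hmemS z).1 hzS)
          · exact Finset.disjoint_left.1 hBS ((hmemB z).1 hzB) ((hmemS z).1 hzS)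

/-- walks starting in `B` whose support avoids `A`-`B` edges stay in `B` -/
lemma chain_stay {A B : Finset V} (hadjAB : ∀ p ∈ A, ∀ q ∈ B, ¬ G.Adj p q) :
    ∀ (zs : List V) (a : V), a ∈ B → List.Chain G.Adj a zs →
      (∀ z ∈ zs, z ∈ A ∨ z ∈ B) → ∀ z ∈ zs, z ∈ B := by
  intro zs
  induction zs with
  | nil => intro a _ _ _ z hz; exact absurd hz List.not_mem_nil
  | cons w rest ih =>
      intro a haB hch hmem z hz
      rw [chain_cons'] at hch
      have hwB : w ∈ B := by
        rcases hmem w (List.mem_cons_self) with hwA | hwB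
        · exact absurd hch.1.symm (hadjAB w hwA a haB)
        · exact hwB
      rcases List.mem_cons.1 hz with rfl | hz'
      · exact hwB
      · exact ih w hwB hch.2 (fun z' hz' => hmem z' (List.mem_cons_of_mem _ hz')) z hz'

lemma nd_arith (hα0 : 0 < α) (hc : 0 < c) {RA S A U : ℕ}
    (hRA : (RA : ℝ) ≤ c * (1 - (2/3 : ℝ) ^ α)⁻¹ * (A : ℝ) ^ α)
    (hS : (S : ℝ) ≤ c * (U : ℝ) ^ α) (hAU : 3 * A ≤ 2 * U) :
    (RA : ℝ) + (S : ℝ) ≤ c * (1 - (2/3 : ℝ) ^ α)⁻¹ * (U : ℝ) ^ α := by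
  set t := (2/3 : ℝ) ^ α with ht
  have ht0 : 0 < t := Real.rpow_pos_of_pos (by norm_num) α
  have ht1 : t < 1 := Real.rpow_lt_one (by norm_num) (by norm_num) hα0
  have hne : (1 : ℝ) - t ≠ 0 := by linarith
  have hDpos : 0 < (1 - t)⁻¹ := inv_pos.2 (by linarith)
  have hA23 : (A : ℝ) ≤ 2/3 * (U : ℝ) := by
    have : ((3 * A : ℕ) : ℝ) ≤ ((2 * U : ℕ) : ℝ) := Nat.cast_le.2 hAU
    push_cast at this
    linarith
  have hAa : (A : ℝ) ^ α ≤ t * (U : ℝ) ^ α := by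
    have h1 : (A : ℝ) ^ α ≤ (2/3 * (U : ℝ)) ^ α :=
      Real.rpow_le_rpow (Nat.cast_nonneg A) hA23 hα0.le
    have h2 : (2/3 * (U : ℝ)) ^ α = t * (U : ℝ) ^ α := by
      rw [Real.mul_rpow (by norm_num) (Nat.cast_nonneg U)]
    linarith
  have hU0 : (0:ℝ) ≤ (U : ℝ) ^ α := Real.rpow_nonneg (Nat.cast_nonneg U) α
  have hkey : c * (1 - t)⁻¹ * (t * (U : ℝ) ^ α) + c * (U : ℝ) ^ α
      = c * (1 - t)⁻¹ * (U : ℝ) ^ α := by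
    have hid : (1 - t)⁻¹ * t + 1 = (1 - t)⁻¹ := by
      field_simp
      ring
    calc c * (1 - t)⁻¹ * (t * (U : ℝ) ^ α) + c * (U : ℝ) ^ α
        = c * (U : ℝ) ^ α * ((1 - t)⁻¹ * t + 1) := by ring
      _ = c * (U : ℝ) ^ α * (1 - t)⁻¹ := by rw [hid]
      _ = c * (1 - t)⁻¹ * (U : ℝ) ^ α := by ring
  have hstep : (RA : ℝ) + (S : ℝ) ≤ c * (1 - t)⁻¹ * (t * (U : ℝ) ^ α) + c * (U : ℝ) ^ α := by
    refine add_le_add (le_trans hRA ?_) hS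
    exact mul_le_mul_of_nonneg_left hAa (by positivity)
  linarith

lemma D_ge_one (hα0 : 0 < α) : (1 : ℝ) ≤ (1 - (2/3 : ℝ) ^ α)⁻¹ := by
  set t := (2/3 : ℝ) ^ α with ht
  have ht0 : 0 < t := Real.rpow_pos_of_pos (by norm_num) α
  have ht1 : t < 1 := Real.rpow_lt_one (by norm_num) (by norm_num) hα0
  have hne : (1 : ℝ) - t ≠ 0 := by linarith
  have h := mul_inv_cancel₀ hne
  nlinarith [inv_pos.2 (show (0:ℝ) < 1 - t by linarith)]

/-- main nested-dissection lemma: every vertex has a small "closed" superset of its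
search space. -/
lemma nd_main (hα0 : 0 < α) (hc : 0 < c) :
    ∀ {U : Finset V} {l : List V}, IsNDOrder G c α U l → ∀ x ∈ U,
    ∃ R : Finset V, x ∈ R ∧ R ⊆ U ∧
      (∀ a ∈ R, ∀ y, LWE G l a y → y ∈ R) ∧
      ((R.card : ℝ) ≤ c * (1 - (2/3 : ℝ) ^ α)⁻¹ * (U.card : ℝ) ^ α) := by
  intro U l h
  induction h with
  | empty => intro x hx; exact absurd hx (Finset.notMem_empty x)
  | @step U S A B lA lB lS hAB hAS hBS hUnion hadjAB hcA hcB hSc hndS htS hA hB ihA ihB =>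
    intro x hx
    obtain ⟨htA, hndA⟩ := nd_toFinset hA
    obtain ⟨htB, hndB⟩ := nd_toFinset hB
    have hmemA : ∀ z, z ∈ lA ↔ z ∈ A := fun z => by rw [← htA, List.mem_toFinset]
    have hmemB : ∀ z, z ∈ lB ↔ z ∈ B := fun z => by rw [← htB, List.mem_toFinset]
    have hmemS : ∀ z, z ∈ lS ↔ z ∈ S := fun z => by rw [← htS, List.mem_toFinset]
    have hSU : S ⊆ U := by
      rw [← hUnion]; exact Finset.subset_union_right
    have hAU : A ⊆ U := by
      rw [← hUnion]
      exact le_trans Finset.subset_union_left Finset.subset_union_left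
    have hBU : B ⊆ U := by
      rw [← hUnion]
      exact le_trans Finset.subset_union_right Finset.subset_union_left
    -- closure of S against LWE
    have hSclose : ∀ a ∈ S, ∀ y, LWE G (lA ++ lB ++ lS) a y → y ∈ S := by
      intro a haS y hw
      obtain ⟨hal, hyl, hidx, -⟩ := hw
      have hanAB : a ∉ lA ++ lB := by
        intro hc'
        rcases List.mem_append.1 hc' with h' | h'
        · exact Finset.disjoint_left.1 hAS ((hmemA a).1 h') haS
        · exact Finset.disjoint_left.1 hBS ((hmemB a).1 h') haS
      have hidxa : (lA ++ lB).length ≤ (lA ++ lB ++ lS).idxOf a := by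
        rw [List.idxOf_append_of_notMem hanAB]
        omega
      have hynAB : y ∉ lA ++ lB := by
        intro hc'
        have := idx_lt_len (l₂ := lS) hc'
        omega
      rcases List.mem_append.1 hyl with h' | h'
      · exact absurd h' hynAB
      · exact (hmemS y).1 h'
    -- the S part is always a valid answer component
    have hScard' : (S.card : ℝ) ≤ c * (1 - (2/3 : ℝ) ^ α)⁻¹ * (U.card : ℝ) ^ α := by
      have hD := D_ge_one (α := α) hα0
      have hU0 : (0:ℝ) ≤ (U.card : ℝ) ^ α := Real.rpow_nonneg (Nat.cast_nonneg _) α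
      calc (S.card : ℝ) ≤ c * (U.card : ℝ) ^ α := hSc
        _ = c * 1 * (U.card : ℝ) ^ α := by ring
        _ ≤ c * (1 - (2/3 : ℝ) ^ α)⁻¹ * (U.card : ℝ) ^ α := by
            apply mul_le_mul_of_nonneg_right _ hU0
            apply mul_le_mul_of_nonneg_left hD hc.le
    rw [← hUnion] at hx
    rcases Finset.mem_union.1 hx with hx' | hxS
    · rcases Finset.mem_union.1 hx' with hxA | hxB
      · -- x in the A side
        obtain ⟨RA, hxRA, hRAsub, hRAclose, hRAcard⟩ := ihA x hxA
        refine ⟨RA ∪ S, Finset.mem_union_left _ hxRA, ?_, ?_, ?_⟩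
        · intro z hz
          rcases Finset.mem_union.1 hz with h' | h'
          · exact hAU (hRAsub h')
          · exact hSU h'
        · intro a haR y hw
          rcases Finset.mem_union.1 haR with haRA | haS
          swap
          · exact Finset.mem_union_right _ (hSclose a haS y hw)
          · obtain ⟨hal, hyl, hidx, zs, hch, hzs⟩ := hw
            have haA : a ∈ A := hRAsub haRA
            have halA : a ∈ lA := (hmemA a).2 haA
            have hidxa : (lA ++ lB ++ lS).idxOf a < lA.length := by
              have h1 : (lA ++ lB ++ lS).idxOf a = lA.idxOf a := by
                rw [List.idxOf_append_of_mem (List.mem_append_left _ halA),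
                  List.idxOf_append_of_mem halA]
              rw [h1]
              exact List.idxOf_lt_length_iff.2 halA
            -- inner vertices are in lA
            have hzsA : ∀ z ∈ zs, z ∈ lA := by
              intro z hz
              obtain ⟨hzl, hzidx⟩ := hzs z hz
              have hlen : (lA ++ lB).length = lA.length + lB.length :=
                List.length_append
              have hzAB : z ∈ lA ++ lB := mem_left_of_idx hzl (by omega)
              have h2 : (lA ++ lB ++ lS).idxOf z = (lA ++ lB).idxOf z :=
                List.idxOf_append_of_mem hzAB
              exact mem_left_of_idx hzAB (by omega)
            -- y cannot be in B
            rcases List.mem_append.1 hyl with hyAB | hyS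
            swap
            · exact Finset.mem_union_right _ ((hmemS y).1 hyS)
            rcases List.mem_append.1 hyAB with hyA | hyB
            swap
            · -- crossing contradiction
              exfalso
              have hBA : ∀ p ∈ B, ∀ q ∈ A, ¬ G.Adj p q :=
                fun p hp q hq hadj => hadjAB q hq p hp hadj.symm
              have hall : ∀ z ∈ zs ++ [y], z ∈ B ∨ z ∈ A := by
                intro z hz
                rcases List.mem_append.1 hz with hz' | hz'
                · exact Or.inr ((hmemA z).1 (hzsA z hz'))
                · rw [List.mem_singleton.1 hz']
                  exact Or.inl ((hmemB y).1 hyB)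
              have := chain_stay hBA (zs ++ [y]) a haA hch hall y
                (List.mem_append_right _ (List.mem_singleton_self y))
              exact Finset.disjoint_left.1 hAB this ((hmemB y).1 hyB)
            · -- transfer to lA and use closure of RA
              have hyidxA : (lA ++ lB ++ lS).idxOf y = lA.idxOf y := by
                rw [List.idxOf_append_of_mem (List.mem_append_left _ hyA),
                  List.idxOf_append_of_mem hyA]
              have haidxA : (lA ++ lB ++ lS).idxOf a = lA.idxOf a := by
                rw [List.idxOf_append_of_mem (List.mem_append_left _ halA),
                  List.idxOf_append_of_mem halA]
              have hLWE : LWE G lA a y := by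
                refine ⟨halA, hyA, by omega, zs, hch, ?_⟩
                intro z hz
                obtain ⟨hzl, hzidx⟩ := hzs z hz
                have hzA := hzsA z hz
                have : (lA ++ lB ++ lS).idxOf z = lA.idxOf z := by
                  rw [List.idxOf_append_of_mem (List.mem_append_left _ hzA),
                    List.idxOf_append_of_mem hzA]
                exact ⟨hzA, by omega⟩
              exact Finset.mem_union_left _ (hRAclose a haRA y hLWE)
        · -- cardinality
          have h1 : ((RA ∪ S).card : ℝ) ≤ (RA.card : ℝ) + (S.card : ℝ) := by
            have := Finset.card_union_le RA S
            push_cast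
            exact_mod_cast this
          refine le_trans h1 ?_
          exact nd_arith hα0 hc hRAcard hSc hcA
      · -- x in the B side
        obtain ⟨RB, hxRB, hRBsub, hRBclose, hRBcard⟩ := ihB x hxB
        refine ⟨RB ∪ S, Finset.mem_union_left _ hxRB, ?_, ?_, ?_⟩
        · intro z hz
          rcases Finset.mem_union.1 hz with h' | h'
          · exact hBU (hRBsub h')
          · exact hSU h'
        · intro a haR y hw
          rcases Finset.mem_union.1 haR with haRB | haS
          swap
          · exact Finset.mem_union_right _ (hSclose a haS y hw)
          · obtain ⟨hal, hyl, hidx, zs, hch, hzs⟩ := hw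
            have haB : a ∈ B := hRBsub haRB
            have halB : a ∈ lB := (hmemB a).2 haB
            have hanA : a ∉ lA := fun hc' =>
              Finset.disjoint_left.1 hAB ((hmemA a).1 hc') haB
            have haidx : (lA ++ lB ++ lS).idxOf a = lA.length + lB.idxOf a := by
              rw [List.idxOf_append_of_mem (List.mem_append_right _ halB),
                List.idxOf_append_of_notMem hanA]
            have haidxlt : (lA ++ lB ++ lS).idxOf a < (lA ++ lB).length := by
              rw [List.idxOf_append_of_mem (List.mem_append_right _ halB)]
              exact List.idxOf_lt_length_iff.2 (List.mem_append_right _ halB)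
            -- inner vertices are in lA ++ lB, i.e. in A ∪ B
            have hzsAB : ∀ z ∈ zs, z ∈ lA ++ lB := by
              intro z hz
              obtain ⟨hzl, hzidx⟩ := hzs z hz
              exact mem_left_of_idx hzl (by omega)
            -- y is not in lA
            have hynA : y ∉ lA := by
              intro hc'
              have h1 : (lA ++ lB ++ lS).idxOf y < lA.length := by
                have := idx_lt_len (l₂ := lB) hc'
                have h2 : (lA ++ lB ++ lS).idxOf y = lA.idxOf y := by
                  rw [List.idxOf_append_of_mem (List.mem_append_left _ hc'),
                    List.idxOf_append_of_mem hc']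
                rw [h2]
                exact List.idxOf_lt_length_iff.2 hc'
              omega
            rcases List.mem_append.1 hyl with hyAB | hyS
            swap
            · exact Finset.mem_union_right _ ((hmemS y).1 hyS)
            have hyB : y ∈ lB := (List.mem_append.1 hyAB).resolve_left hynA
            -- all inner vertices are in B (no crossing back to A)
            have hall : ∀ z ∈ zs ++ [y], z ∈ A ∨ z ∈ B := by
              intro z hz
              rcases List.mem_append.1 hz with hz' | hz'
              · rcases List.mem_append.1 (hzsAB z hz') with h' | h'
                · exact Or.inl ((hmemA z).1 h')
                · exact Or.inr ((hmemB z).1 h')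
              · rw [List.mem_singleton.1 hz']
                exact Or.inr ((hmemB y).1 hyB)
            have hstay := chain_stay hadjAB (zs ++ [y]) a haB hch hall
            have hzsB : ∀ z ∈ zs, z ∈ lB := by
              intro z hz
              exact (hmemB z).2 (hstay z (List.mem_append_left _ hz))
            -- transfer to lB
            have hLWE : LWE G lB a y := by
              refine ⟨halB, hyB, ?_, zs, hch, ?_⟩
              · have hynA' : y ∉ lA := hynA
                have hyidx : (lA ++ lB ++ lS).idxOf y = lA.length + lB.idxOf y := by
                  rw [List.idxOf_append_of_mem (List.mem_append_right _ hyB),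
                    List.idxOf_append_of_notMem hynA']
                omega
              · intro z hz
                obtain ⟨hzl, hzidx⟩ := hzs z hz
                have hzB := hzsB z hz
                have hznA : z ∉ lA := fun hc' =>
                  Finset.disjoint_left.1 hAB ((hmemA z).1 hc') ((hmemB z).1 hzB)
                have : (lA ++ lB ++ lS).idxOf z = lA.length + lB.idxOf z := by
                  rw [List.idxOf_append_of_mem (List.mem_append_right _ hzB),
                    List.idxOf_append_of_notMem hznA]
                exact ⟨hzB, by omega⟩
            exact Finset.mem_union_left _ (hRBclose a haRB y hLWE)
        · have h1 : ((RB ∪ S).card : ℝ) ≤ (RB.card : ℝ) + (S.card : ℝ) := by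
            have := Finset.card_union_le RB S
            exact_mod_cast this
          refine le_trans h1 ?_
          exact nd_arith hα0 hc hRBcard hSc hcB
    · -- x in the separator
      exact ⟨S, hxS, hSU, hSclose, hScard'⟩

end S9

section S10

variable [Fintype V] [DecidableEq V] {n : ℕ} {G : SimpleGraph V} {c α : ℝ}

/-- the search space of `x` is contained in a small closed set, for ND orders -/
lemma nd_reach (hα0 : 0 < α) (hc : 0 < c) {π : Fin n ≃ V}
    (hnd : IsNDOrder G c α Finset.univ (Lnd π)) (x : V) :
    ∃ R : Finset V, (∀ u, UpReach G π x u → u ∈ R) ∧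
      ((R.card : ℝ) ≤ c * (1 - (2/3 : ℝ) ^ α)⁻¹ * ((Fintype.card V : ℝ)) ^ α) := by
  obtain ⟨R, hxR, -, hclose, hcard⟩ := nd_main hα0 hc hnd x (Finset.mem_univ x)
  refine ⟨R, ?_, by rwa [Finset.card_univ] at hcard⟩
  intro u h
  induction h with
  | refl => exact hxR
  | tail hsteps hlast ih =>
      obtain ⟨hadj, hr⟩ := hlast
      obtain ⟨zs, hch, hcond⟩ := chList_adj_fill (Lnd π) G hadj
      refine hclose _ ih _ ⟨Lnd_mem π _, Lnd_mem π _, ?_, zs, hch, ?_⟩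
      · rw [Lnd_indexOf, Lnd_indexOf]
        exact hr
      · intro z hz
        obtain ⟨hzl, hz1, hz2⟩ := hcond z hz
        exact ⟨hzl, hz1⟩

lemma nVerts_le_R {π : Fin n ≃ V} {x : V} {R : Finset V}
    (hR : ∀ u, UpReach G π x u → u ∈ R) : nVertsSS G π x ≤ R.card := by
  have hsub : {u | UpReach G π x u} ⊆ (↑R : Set V) := fun u hu => hR u hu
  calc {u | UpReach G π x u}.ncard ≤ (↑R : Set V).ncard :=
        Set.ncard_le_ncard hsub (Set.toFinite _)
    _ = R.card := Set.ncard_coe_finset R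

lemma nArcs_le_R {π : Fin n ≃ V} {x : V} {R : Finset V}
    (hR : ∀ u, UpReach G π x u → u ∈ R) : nArcsSS G π x ≤ R.card * R.card := by
  have hsub : {q : V × V | (chGraph G π).Adj q.1 q.2 ∧ rk π q.1 < rk π q.2 ∧
      UpReach G π x q.1 ∧ UpReach G π x q.2} ⊆ (↑(R ×ˢ R) : Set (V × V)) := by
    intro q hq
    obtain ⟨-, -, h1, h2⟩ := hq
    rw [Finset.coe_product]
    exact ⟨hR _ h1, hR _ h2⟩
  calc nArcsSS G π x ≤ (↑(R ×ˢ R) : Set (V × V)).ncard :=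
        Set.ncard_le_ncard hsub (Set.toFinite _)
    _ = (R ×ˢ R).card := Set.ncard_coe_finset _
    _ = R.card * R.card := Finset.card_product R R

/-- lower bounds coming from the balanced separator of `exists_sep` -/
lemma sep_lower {π : Fin n ≃ V} (hG : G.Connected) (hn : 0 < n)
    (hcard : Fintype.card V = n) :
    ∃ (a : V) (Sf : Finset V) (P : Finset (V × V)),
      IsBalancedSepOn G Finset.univ Sf ∧
      2 * n < 3 * (Dset G π a).card ∧
      (∀ v ∈ Dset G π a, Sf.card ≤ nVertsSS G π v) ∧
      (∀ v ∈ Dset G π a, P.card ≤ nArcsSS G π v) ∧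
      2 * P.card = Sf.card * Sf.card - Sf.card := by
  classical
  obtain ⟨a, hbal, haD, hclq, hreach⟩ := exists_sep (π := π) hG hn hcard
  set Sf := insert a (up G π a) with hSf
  set P := Sf.offDiag.filter (fun q => rk π q.1 < rk π q.2) with hP
  refine ⟨a, Sf, P, hbal, haD, ?_, ?_, ?_⟩
  · intro v hv
    have hsub : (↑Sf : Set V) ⊆ {u | UpReach G π v u} := fun u hu => hreach v hv u hu
    calc Sf.card = (↑Sf : Set V).ncard := (Set.ncard_coe_finset Sf).symm
      _ ≤ {u | UpReach G π v u}.ncard := Set.ncard_le_ncard hsub (Set.toFinite _)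
  · intro v hv
    have hsub : (↑P : Set (V × V)) ⊆ {q : V × V | (chGraph G π).Adj q.1 q.2 ∧
        rk π q.1 < rk π q.2 ∧ UpReach G π v q.1 ∧ UpReach G π v q.2} := by
      intro q hq
      rw [Finset.mem_coe, hP, Finset.mem_filter, Finset.mem_offDiag] at hq
      obtain ⟨⟨h1, h2, h3⟩, h4⟩ := hq
      exact ⟨hclq q.1 h1 q.2 h2 h3, h4, hreach v hv q.1 h1, hreach v hv q.2 h2⟩
    calc P.card = (↑P : Set (V × V)).ncard := (Set.ncard_coe_finset P).symm
      _ ≤ _ := Set.ncard_le_ncard hsub (Set.toFinite _)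
  · -- counting: exactly half of the off-diagonal pairs are ordered upward
    have hsplit := Finset.card_filter_add_card_filter_not
      (s := Sf.offDiag) (p := fun q => rk π q.1 < rk π q.2)
    have hswap : (Sf.offDiag.filter (fun q => ¬ rk π q.1 < rk π q.2)).card = P.card := by
      refine Finset.card_bij' (fun q _ => (q.2, q.1)) (fun q _ => (q.2, q.1))
        ?_ ?_ ?_ ?_
      case refine_1 =>
        intro q hq
        rw [Finset.mem_filter, Finset.mem_offDiag] at hq
        obtain ⟨⟨h1, h2, h3⟩, h4⟩ := hq
        rw [hP, Finset.mem_filter, Finset.mem_offDiag]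
        refine ⟨⟨h2, h1, Ne.symm h3⟩, ?_⟩
        have : rk π q.1 ≠ rk π q.2 := fun hc => h3 (rk_inj π hc)
        simp only
        omega
      case refine_2 =>
        intro q hq
        rw [hP, Finset.mem_filter, Finset.mem_offDiag] at hq
        obtain ⟨⟨h1, h2, h3⟩, h4⟩ := hq
        rw [Finset.mem_filter, Finset.mem_offDiag]
        exact ⟨⟨h2, h1, Ne.symm h3⟩, by simp only; omega⟩
      case refine_3 => intro q _; rfl
      case refine_4 => intro q _; rfl
    have hoff : Sf.offDiag.card = Sf.card * Sf.card - Sf.card := Finset.offDiag_card Sf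
    rw [← hP] at hsplit
    omega

end S10

set_option maxHeartbeats 1000000

/-- Under the stated separator hypotheses, a nested dissection order is
a constant-factor approximation (the constant `K` depending only on `α`, `c`, `c'`)
of the optimal maximum and average search space sizes, in vertices and in arcs. -/
theorem stmt6 (α c c' : ℝ) (hα0 : 0 < α) (hα1 : α < 1) (hc : 0 < c) (hc' : 0 < c') :
    ∃ K : ℝ, ∀ (V : Type) [Fintype V] [DecidableEq V] (n : ℕ) (G : SimpleGraph V),
      G.Connected →
      ∀ πnd : Fin n ≃ V,
      (∀ U : Finset V, U.Nonempty →
        ∃ S : Finset V, IsBalancedSepOn G U S ∧ (S.card : ℝ) ≤ c * (U.card : ℝ) ^ α) →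
      (∀ S : Finset V, IsBalancedSepOn G Finset.univ S → c' * (n : ℝ) ^ α ≤ (S.card : ℝ)) →
      2 ≤ c' * (n : ℝ) ^ α →
      IsNDOrder G c α Finset.univ ((List.finRange n).map ⇑πnd) →
      ∀ π : Fin n ≃ V,
        (((Finset.univ.sup (nVertsSS G πnd) : ℕ) : ℝ) ≤
          K * ((Finset.univ.sup (nVertsSS G π) : ℕ) : ℝ)) ∧
        ((∑ v : V, (nVertsSS G πnd v : ℝ)) ≤ K * ∑ v : V, (nVertsSS G π v : ℝ)) ∧
        (((Finset.univ.sup (nArcsSS G πnd) : ℕ) : ℝ) ≤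
          K * ((Finset.univ.sup (nArcsSS G π) : ℕ) : ℝ)) ∧
        ((∑ v : V, (nArcsSS G πnd v : ℝ)) ≤ K * ∑ v : V, (nArcsSS G π v : ℝ)) := by
  classical
  set D := (1 - (2/3 : ℝ) ^ α)⁻¹ with hDdef
  have ht0 : 0 < (2/3 : ℝ) ^ α := Real.rpow_pos_of_pos (by norm_num) α
  have ht1 : (2/3 : ℝ) ^ α < 1 := Real.rpow_lt_one (by norm_num) (by norm_num) hα0
  have hDpos : 0 < D := by rw [hDdef]; exact inv_pos.2 (by linarith)
  set k := c * D / c' with hkdef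
  have hk0 : 0 < k := by
    rw [hkdef]
    positivity
  set K := (3/2) * k + 6 * k^2 with hKdef
  have hK0 : 0 < K := by rw [hKdef]; positivity
  refine ⟨K, ?_⟩
  intro V _ _ n G hG πnd hsub hmin h2 hnd π
  -- basic facts
  have hn0 : 0 < n := by
    rcases Nat.eq_zero_or_pos n with rfl | h
    · rw [Nat.cast_zero, Real.zero_rpow (ne_of_gt hα0)] at h2
      linarith
    · exact h
  have hcard : Fintype.card V = n :=
    (Fintype.card_congr πnd.symm).trans (Fintype.card_fin n)
  set X := (n : ℝ) ^ α with hXdef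
  have hX0 : 0 ≤ X := Real.rpow_nonneg (Nat.cast_nonneg n) α
  set Y := c' * X with hYdef
  have hY2 : 2 ≤ Y := h2
  have hY0 : 0 ≤ Y := by linarith
  have hnn0 : (0:ℝ) ≤ (n : ℝ) := Nat.cast_nonneg n
  have hCDX : c * D * X = k * Y := by
    rw [hkdef, hYdef]
    field_simp
  -- upper bounds for the nested dissection order
  have hup : ∀ x : V, (nVertsSS G πnd x : ℝ) ≤ k * Y ∧
      (nArcsSS G πnd x : ℝ) ≤ (k * Y) * (k * Y) := by
    intro x
    obtain ⟨R, hRreach, hRcard⟩ := nd_reach hα0 hc hnd x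
    rw [hcard] at hRcard
    rw [← hDdef, ← hXdef, hCDX] at hRcard
    have hkY0 : 0 ≤ k * Y := by positivity
    constructor
    · refine le_trans ?_ hRcard
      exact_mod_cast nVerts_le_R hRreach
    · have h1 : (nArcsSS G πnd x : ℝ) ≤ (R.card : ℝ) * (R.card : ℝ) := by
        exact_mod_cast nArcs_le_R hRreach
      refine le_trans h1 ?_
      exact mul_le_mul hRcard hRcard (Nat.cast_nonneg _) hkY0
  -- lower bounds for the arbitrary order
  obtain ⟨a, Sf, P, hbal, haD, hvl, hal, hPcard⟩ := sep_lower (π := π) hG hn0 hcard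
  have hs : Y ≤ (Sf.card : ℝ) := hmin Sf hbal
  have hs2 : (2 : ℝ) ≤ (Sf.card : ℝ) := le_trans hY2 hs
  have hs2n : 2 ≤ Sf.card := by exact_mod_cast hs2
  have hPl : Y * Y / 4 ≤ (P.card : ℝ) := by
    have hle : Sf.card ≤ Sf.card * Sf.card := Nat.le_mul_of_pos_left _ (by omega)
    have hcast : 2 * (P.card : ℝ) = (Sf.card : ℝ) * (Sf.card : ℝ) - (Sf.card : ℝ) := by
      have := congrArg (fun m : ℕ => (m : ℝ)) hPcard
      push_cast [Nat.cast_sub hle] at this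
      linarith
    nlinarith [hs, hs2, hY0]
  have hDl : 2 * (n : ℝ) / 3 ≤ ((Dset G π a).card : ℝ) := by
    have : (2 * n : ℝ) < 3 * ((Dset G π a).card : ℝ) := by exact_mod_cast haD
    linarith
  -- lower bounds on the four quantities
  have hVne : (Finset.univ : Finset V).Nonempty := ⟨πnd ⟨0, hn0⟩, Finset.mem_univ _⟩
  have LmaxV : Y ≤ ((Finset.univ.sup (nVertsSS G π) : ℕ) : ℝ) := by
    refine le_trans hs ?_
    have h1 : Sf.card ≤ nVertsSS G π a := hvl a (self_mem_Dset a)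
    have h2' : nVertsSS G π a ≤ Finset.univ.sup (nVertsSS G π) :=
      Finset.le_sup (Finset.mem_univ a)
    exact_mod_cast le_trans h1 h2'
  have LmaxA : Y * Y / 4 ≤ ((Finset.univ.sup (nArcsSS G π) : ℕ) : ℝ) := by
    refine le_trans hPl ?_
    have h1 : P.card ≤ nArcsSS G π a := hal a (self_mem_Dset a)
    have h2' : nArcsSS G π a ≤ Finset.univ.sup (nArcsSS G π) :=
      Finset.le_sup (Finset.mem_univ a)
    exact_mod_cast le_trans h1 h2'
  have LsumV : 2 * (n : ℝ) / 3 * Y ≤ ∑ v : V, (nVertsSS G π v : ℝ) := by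
    have h1 : ∑ v ∈ Dset G π a, (nVertsSS G π v : ℝ) ≤ ∑ v : V, (nVertsSS G π v : ℝ) :=
      Finset.sum_le_sum_of_subset_of_nonneg (Finset.subset_univ _)
        (fun i _ _ => Nat.cast_nonneg _)
    have h2' : ∑ v ∈ Dset G π a, ((Sf.card : ℝ)) ≤ ∑ v ∈ Dset G π a, (nVertsSS G π v : ℝ) :=
      Finset.sum_le_sum (fun v hv => by exact_mod_cast hvl v hv)
    rw [Finset.sum_const, nsmul_eq_mul] at h2'
    have h3 : 2 * (n : ℝ) / 3 * Y ≤ ((Dset G π a).card : ℝ) * (Sf.card : ℝ) :=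
      mul_le_mul hDl hs hY0 (Nat.cast_nonneg _)
    linarith
  have LsumA : 2 * (n : ℝ) / 3 * (Y * Y / 4) ≤ ∑ v : V, (nArcsSS G π v : ℝ) := by
    have h1 : ∑ v ∈ Dset G π a, (nArcsSS G π v : ℝ) ≤ ∑ v : V, (nArcsSS G π v : ℝ) :=
      Finset.sum_le_sum_of_subset_of_nonneg (Finset.subset_univ _)
        (fun i _ _ => Nat.cast_nonneg _)
    have h2' : ∑ v ∈ Dset G π a, ((P.card : ℝ)) ≤ ∑ v ∈ Dset G π a, (nArcsSS G π v : ℝ) :=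
      Finset.sum_le_sum (fun v hv => by exact_mod_cast hal v hv)
    rw [Finset.sum_const, nsmul_eq_mul] at h2'
    have h3 : 2 * (n : ℝ) / 3 * (Y * Y / 4) ≤ ((Dset G π a).card : ℝ) * (P.card : ℝ) :=
      mul_le_mul hDl hPl (by positivity) (Nat.cast_nonneg _)
    linarith
  -- upper bounds on the four quantities
  have UmaxV : ((Finset.univ.sup (nVertsSS G πnd) : ℕ) : ℝ) ≤ k * Y := by
    obtain ⟨v, -, hveq⟩ := Finset.exists_mem_eq_sup Finset.univ hVne (nVertsSS G πnd)
    rw [hveq]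
    exact (hup v).1
  have UmaxA : ((Finset.univ.sup (nArcsSS G πnd) : ℕ) : ℝ) ≤ (k * Y) * (k * Y) := by
    obtain ⟨v, -, hveq⟩ := Finset.exists_mem_eq_sup Finset.univ hVne (nArcsSS G πnd)
    rw [hveq]
    exact (hup v).2
  have UsumV : ∑ v : V, (nVertsSS G πnd v : ℝ) ≤ (n : ℝ) * (k * Y) := by
    have h1 : ∑ v : V, (nVertsSS G πnd v : ℝ) ≤ ∑ _v : V, (k * Y) :=
      Finset.sum_le_sum (fun v _ => (hup v).1)
    rwa [Finset.sum_const, nsmul_eq_mul, Finset.card_univ, hcard] at h1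
  have UsumA : ∑ v : V, (nArcsSS G πnd v : ℝ) ≤ (n : ℝ) * ((k * Y) * (k * Y)) := by
    have h1 : ∑ v : V, (nArcsSS G πnd v : ℝ) ≤ ∑ _v : V, ((k * Y) * (k * Y)) :=
      Finset.sum_le_sum (fun v _ => (hup v).2)
    rwa [Finset.sum_const, nsmul_eq_mul, Finset.card_univ, hcard] at h1
  -- the four algebraic comparisons
  have alg1 : k * Y ≤ K * Y := by
    have heq : K - k = k / 2 + 6 * k^2 := by rw [hKdef]; ring
    have h : 0 ≤ (K - k) * Y := by
      rw [heq]
      positivity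
    linarith
  have alg2 : (n : ℝ) * (k * Y) ≤ K * (2 * (n : ℝ) / 3 * Y) := by
    have heq : K * (2 * (n : ℝ) / 3 * Y) - (n : ℝ) * (k * Y) = 4 * k^2 * ((n : ℝ) * Y) := by
      rw [hKdef]; ring
    have h : 0 ≤ 4 * k^2 * ((n : ℝ) * Y) := by positivity
    linarith
  have alg3 : (k * Y) * (k * Y) ≤ K * (Y * Y / 4) := by
    have heq : K * (Y * Y / 4) - (k * Y) * (k * Y) = (3 * k / 8 + k^2 / 2) * (Y * Y) := by
      rw [hKdef]; ring
    have h : 0 ≤ (3 * k / 8 + k^2 / 2) * (Y * Y) := by positivity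
    linarith
  have alg4 : (n : ℝ) * ((k * Y) * (k * Y)) ≤ K * (2 * (n : ℝ) / 3 * (Y * Y / 4)) := by
    have heq : K * (2 * (n : ℝ) / 3 * (Y * Y / 4)) - (n : ℝ) * ((k * Y) * (k * Y))
        = (k / 4) * ((n : ℝ) * (Y * Y)) := by
      rw [hKdef]; ring
    have h : 0 ≤ (k / 4) * ((n : ℝ) * (Y * Y)) := by positivity
    linarith
  -- conclusion
  have key : ∀ L R bnd low : ℝ, L ≤ bnd → low ≤ R → bnd ≤ K * low → L ≤ K * R := by
    intro L R bnd low h1 h2'' h3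
    calc L ≤ bnd := h1
      _ ≤ K * low := h3
      _ ≤ K * R := mul_le_mul_of_nonneg_left h2'' hK0.le
  exact ⟨key _ _ _ _ UmaxV LmaxV alg1, key _ _ _ _ UsumV LsumV alg2,
    key _ _ _ _ UmaxA LmaxA alg3, key _ _ _ _ UsumA LsumA alg4⟩
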